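/- arXiv:1808.01069 — 3 statements merged into one kernel-verified Lean document; each statement's English description precedes it below -/
import Mathlib

section
/- Let C = {λ ∈ P : |(λ, α^∨)| ≤ m(α) for all α ∈ Φ}. Then every orbit of the affine Weyl group W ⋉ Q^m acting on P intersects C ∩ P^+ in exactly one point, where Q^m is the root lattice of Φ^m acting by translations. In particular, every W ⋉ P^m-orbit in P intersects C. -/
open RealInnerProductSpace

namespace MetaplecticAlcove

variable {E : Type*} [NormedAddCommGroup E] [InnerProductSpace ℝ E]

/-- `pr v w = ⟨v, w^∨⟩`. -/
noncomputable def pr (v w : E) : ℝ := 2 * ⟪v, w⟫ / ⟪w, w⟫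

/-- reflection in the hyperplane orthogonal to `α`. -/
noncomputable def sr (α v : E) : E := v - pr v α • α

lemma inner_self_pos' {a : E} (h : a ≠ 0) : 0 < ⟪a, a⟫ := by
  have := real_inner_self_nonpos (x := a)
  rcases lt_or_eq_of_le (real_inner_self_nonneg (x := a)) with h1 | h1
  · exact h1
  · exact absurd (this.mp h1.symm.le) h

lemma pr_add (a b w : E) : pr (a + b) w = pr a w + pr b w := by
  simp [pr, inner_add_left]; ring

lemma pr_smul (r : ℝ) (a w : E) : pr (r • a) w = r * pr a w := by
  simp [pr, real_inner_smul_left]; ring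

lemma pr_neg (a w : E) : pr (-a) w = - pr a w := by
  simp [pr, inner_neg_left]; ring

lemma pr_sub (a b w : E) : pr (a - b) w = pr a w - pr b w := by
  rw [sub_eq_add_neg, pr_add, pr_neg]; ring

lemma pr_zero (w : E) : pr 0 w = 0 := by simp [pr]

lemma pr_neg_right (a w : E) : pr a (-w) = - pr a w := by
  simp [pr, inner_neg_left, inner_neg_right, neg_div]

lemma pr_self {w : E} (h : w ≠ 0) : pr w w = 2 := by
  have := inner_self_pos' h
  rw [pr, mul_div_assoc, div_self this.ne', mul_one]

lemma inner_eq_pr (v w : E) : 2 * ⟪v, w⟫ = pr v w * ⟪w, w⟫ := by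
  by_cases h : w = 0
  · simp [h]
  · unfold pr; rw [div_mul_cancel₀ _ (inner_self_pos' h).ne']

lemma pr_pos_iff {v w : E} (h : w ≠ 0) : 0 < pr v w ↔ 0 < ⟪v, w⟫ := by
  have hw := inner_self_pos' h
  constructor
  · intro hp
    nlinarith [inner_eq_pr v w]
  · intro hp
    have : 0 < 2 * ⟪v,w⟫ := by linarith
    exact div_pos this hw

lemma sr_add (α a b : E) : sr α (a + b) = sr α a + sr α b := by
  simp [sr, pr_add, add_smul]; abel

lemma sr_smul (α : E) (r : ℝ) (a : E) : sr α (r • a) = r • sr α a := by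
  simp [sr, pr_smul, smul_sub, mul_smul]

lemma sr_neg_arg (α a : E) : sr α (-a) = - sr α a := by
  have := sr_smul α (-1) a
  simpa using this

lemma sr_sub (α a b : E) : sr α (a - b) = sr α a - sr α b := by
  rw [sub_eq_add_neg, sr_add, sr_neg_arg, sub_eq_add_neg]

lemma sr_zero (α : E) : sr α 0 = 0 := by simp [sr, pr_zero]

lemma sr_neg_root (α v : E) : sr (-α) v = sr α v := by
  simp [sr, pr_neg_right]

lemma sr_root {α : E} (h : α ≠ 0) : sr α α = -α := by
  simp [sr, pr_self h, two_smul]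

lemma inner_sr {α : E} (h : α ≠ 0) (a b : E) : ⟪sr α a, sr α b⟫ = ⟪a, b⟫ := by
  have hw := inner_self_pos' h
  simp only [sr, inner_sub_left, inner_sub_right, real_inner_smul_left, real_inner_smul_right]
  have ha : pr a α * ⟪α,α⟫ = 2 * ⟪a, α⟫ := (inner_eq_pr a α).symm
  have hb : pr b α * ⟪α,α⟫ = 2 * ⟪b, α⟫ := (inner_eq_pr b α).symm
  have hc : ⟪α, b⟫ = ⟪b, α⟫ := real_inner_comm b α
  have key : pr a α * ⟪b,α⟫ = pr b α * ⟪a,α⟫ := by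
    have hw' := hw.ne'
    unfold pr
    field_simp
  linear_combination (-(pr a α)) * hc + pr b α * ha - key

lemma sr_sr {α : E} (h : α ≠ 0) (v : E) : sr α (sr α v) = v := by
  simp only [sr, pr_sub, pr_smul, pr_self h, sub_smul, mul_smul]
  module

lemma pr_sr {α : E} (h : α ≠ 0) (a b : E) : pr (sr α a) (sr α b) = pr a b := by
  unfold pr
  rw [inner_sr h, inner_sr h]

/-- self-adjointness of the reflection wrt `pr`. -/
lemma pr_sr_swap {α : E} (h : α ≠ 0) (a b : E) : pr (sr α a) b = pr a (sr α b) := by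
  conv_lhs => rw [show b = sr α (sr α b) from (sr_sr h b).symm]
  rw [pr_sr h]

/-- action of a word (list of roots) by reflections; head acts last. -/
noncomputable def act (l : List E) (v : E) : E := l.foldr sr v

@[simp] lemma act_nil (v : E) : act ([] : List E) v = v := rfl

@[simp] lemma act_cons (β : E) (l : List E) (v : E) : act (β :: l) v = sr β (act l v) := rfl

lemma act_append (l₁ l₂ : List E) (v : E) : act (l₁ ++ l₂) v = act l₁ (act l₂ v) := by
  induction l₁ with
  | nil => rfl
  | cons h t ih => simp [act_cons, ih]

lemma act_add (l : List E) (a b : E) : act l (a + b) = act l a + act l b := by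
  induction l with
  | nil => rfl
  | cons h t ih => simp [act_cons, ih, sr_add]

lemma act_smul (l : List E) (r : ℝ) (a : E) : act l (r • a) = r • act l a := by
  induction l with
  | nil => rfl
  | cons h t ih => simp [act_cons, ih, sr_smul]

lemma act_sub (l : List E) (a b : E) : act l (a - b) = act l a - act l b := by
  induction l with
  | nil => rfl
  | cons h t ih => simp [act_cons, ih, sr_sub]

lemma act_zero (l : List E) : act l (0 : E) = 0 := by
  induction l with
  | nil => rfl
  | cons h t ih => simp [act_cons, ih, sr_zero]

/-- The package of hypotheses. -/
structure Setup (E : Type*) [NormedAddCommGroup E] [InnerProductSpace ℝ E] where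
  Φ : Set E
  Φp : Set E
  m : E → ℕ
  hfin : Φ.Finite
  h0 : (0 : E) ∉ Φ
  hneg : ∀ α ∈ Φ, -α ∈ Φ
  hcrys : ∀ α ∈ Φ, ∀ β ∈ Φ, ∃ z : ℤ, pr β α = (z : ℝ)
  hrefl : ∀ α ∈ Φ, ∀ β ∈ Φ, sr α β ∈ Φ
  hred : ∀ α ∈ Φ, ∀ c : ℝ, c • α ∈ Φ → c = 1 ∨ c = -1
  hsub : Φp ⊆ Φ
  hpart : ∀ α ∈ Φ, (α ∈ Φp ↔ ¬(-α ∈ Φp))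
  hclosed : ∀ α ∈ Φp, ∀ β ∈ Φp, α + β ∈ Φ → α + β ∈ Φp
  hm : ∀ α ∈ Φ, 0 < m α
  hmneg : ∀ α ∈ Φ, m (-α) = m α
  hminv : ∀ α ∈ Φ, ∀ β ∈ Φ, m (sr α β) = m β

namespace Setup

variable {S : Setup E}

lemma root_ne_zero {α : E} (h : α ∈ S.Φ) : α ≠ 0 := fun e => S.h0 (e ▸ h)

lemma root_inner_pos {α : E} (h : α ∈ S.Φ) : 0 < ⟪α, α⟫ := inner_self_pos' (root_ne_zero h)

lemma pos_root {α : E} (h : α ∈ S.Φp) : α ∈ S.Φ := S.hsub h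

lemma pos_not_neg {α : E} (h : α ∈ S.Φp) : -α ∉ S.Φp := (S.hpart α (pos_root h)).mp h

lemma neg_pos_of_not_pos {α : E} (hα : α ∈ S.Φ) (h : α ∉ S.Φp) : -α ∈ S.Φp := by
  by_contra hc
  exact h ((S.hpart α hα).mpr hc)

lemma sr_mem {α β : E} (hα : α ∈ S.Φ) (hβ : β ∈ S.Φ) : sr α β ∈ S.Φ := S.hrefl α hα β hβ

lemma m_pos {α : E} (h : α ∈ S.Φ) : 0 < S.m α := S.hm α h

lemma act_mem {l : List E} (hl : ∀ γ ∈ l, γ ∈ S.Φ) {β : E} (hβ : β ∈ S.Φ) :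
    act l β ∈ S.Φ := by
  induction l with
  | nil => simpa using hβ
  | cons h t ih =>
      simp only [act_cons]
      exact sr_mem (hl h (by simp)) (ih (fun γ hγ => hl γ (by simp [hγ])))

lemma act_m {l : List E} (hl : ∀ γ ∈ l, γ ∈ S.Φ) {β : E} (hβ : β ∈ S.Φ) :
    S.m (act l β) = S.m β := by
  induction l with
  | nil => rfl
  | cons h t ih =>
      have ht : ∀ γ ∈ t, γ ∈ S.Φ := fun γ hγ => hl γ (by simp [hγ])
      simp only [act_cons]
      rw [S.hminv h (hl h (by simp)) _ (act_mem ht hβ), ih ht]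

lemma act_inner {l : List E} (hl : ∀ γ ∈ l, γ ∈ S.Φ) (a b : E) :
    ⟪act l a, act l b⟫ = ⟪a, b⟫ := by
  induction l with
  | nil => rfl
  | cons h t ih =>
      have ht : ∀ γ ∈ t, γ ∈ S.Φ := fun γ hγ => hl γ (by simp [hγ])
      simp only [act_cons]
      rw [inner_sr (root_ne_zero (hl h (by simp))), ih ht]

lemma act_pr {l : List E} (hl : ∀ γ ∈ l, γ ∈ S.Φ) (a b : E) :
    pr (act l a) (act l b) = pr a b := by
  unfold pr
  rw [act_inner hl, act_inner hl]

lemma act_reverse_act {l : List E} (hl : ∀ γ ∈ l, γ ∈ S.Φ) (v : E) :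
    act l.reverse (act l v) = v := by
  induction l generalizing v with
  | nil => rfl
  | cons h t ih =>
      have ht : ∀ γ ∈ t, γ ∈ S.Φ := fun γ hγ => hl γ (by simp [hγ])
      simp only [act_cons, List.reverse_cons, act_append]
      show act t.reverse (act [h] (sr h (act t v))) = v
      simp only [act_cons, act_nil]
      rw [sr_sr (root_ne_zero (hl h (by simp))), ih ht]

lemma act_act_reverse {l : List E} (hl : ∀ γ ∈ l, γ ∈ S.Φ) (v : E) :
    act l (act l.reverse v) = v := by
  have h2 : ∀ γ ∈ l.reverse, γ ∈ S.Φ := fun γ hγ => hl γ (List.mem_reverse.mp hγ)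
  have := act_reverse_act (S := S) h2 v
  rwa [List.reverse_reverse] at this

lemma pr_act_left {l : List E} (hl : ∀ γ ∈ l, γ ∈ S.Φ) (a b : E) :
    pr (act l a) b = pr a (act l.reverse b) := by
  conv_lhs => rw [show b = act l (act l.reverse b) from (act_act_reverse hl b).symm]
  rw [act_pr hl]

/-- conjugation formula : `s_{w α} ∘ w = w ∘ s_α`. -/
lemma act_conj {l : List E} (hl : ∀ γ ∈ l, γ ∈ S.Φ) (α v : E) :
    sr (act l α) (act l v) = act l (sr α v) := by
  unfold sr
  rw [act_pr hl, act_sub, act_smul]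

lemma inner_list_sum (l : List E) (c : E) : ⟪l.sum, c⟫ = (l.map fun x => ⟪x, c⟫).sum := by
  induction l with
  | nil => simp
  | cons h t ih => simp [inner_add_left, ih]

lemma pr_list_sum (l : List E) (c : E) : pr l.sum c = (l.map fun x => pr x c).sum := by
  induction l with
  | nil => simp [pr_zero]
  | cons h t ih => simp [pr_add, ih]

lemma exists_pos_of_sum_pos {l : List ℝ} (h : 0 < l.sum) : ∃ x ∈ l, 0 < x := by
  induction l with
  | nil => simp at h
  | cons a t ih =>
      by_cases ha : 0 < a
      · exact ⟨a, by simp, ha⟩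
      · have : 0 < t.sum := by
          simp only [List.sum_cons] at h
          push_neg at ha
          linarith
        obtain ⟨x, hx, hx0⟩ := ih this
        exact ⟨x, by simp [hx], hx0⟩

lemma strict_cs {x y : E} (hdep : ∀ r : ℝ, x ≠ r • y) (hy : y ≠ 0) :
    ⟪x, y⟫ ^ 2 < ⟪x, x⟫ * ⟪y, y⟫ := by
  have hyy := inner_self_pos' hy
  set u : E := ⟪y,y⟫ • x - ⟪x,y⟫ • y with hu
  have hune : u ≠ 0 := by
    intro hc
    have h2 : ⟪y,y⟫ • x = ⟪x,y⟫ • y := sub_eq_zero.mp (hu ▸ hc)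
    have hx : (⟪x,y⟫ / ⟪y,y⟫) • y = x := by
      rw [div_eq_inv_mul, mul_smul, ← h2, smul_smul, inv_mul_cancel₀ hyy.ne', one_smul]
    exact hdep _ hx.symm
  have hpos : 0 < ⟪u, u⟫ := inner_self_pos' hune
  have hexp : ⟪u, u⟫ = ⟪y,y⟫ * (⟪x,x⟫ * ⟪y,y⟫ - ⟪x,y⟫ ^ 2) := by
    simp only [hu, inner_sub_left, inner_sub_right, real_inner_smul_left, real_inner_smul_right]
    rw [real_inner_comm x y]
    ring
  nlinarith [hpos, hexp, hyy]

variable {S : Setup E}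

lemma not_dep {x y : E} (hx : x ∈ S.Φ) (hy : y ∈ S.Φ) (h1 : x ≠ y) (h2 : x ≠ -y) :
    ∀ r : ℝ, x ≠ r • y := by
  intro r hc
  rcases S.hred y hy r (hc ▸ hx) with h | h
  · rw [h, one_smul] at hc; exact h1 hc
  · rw [h, neg_one_smul] at hc; exact h2 hc

lemma string_sub {x y : E} (hx : x ∈ S.Φ) (hy : y ∈ S.Φ) (hpos : 0 < ⟪x, y⟫)
    (hne : x ≠ y) : x - y ∈ S.Φ := by
  have hyne : y ≠ 0 := root_ne_zero hy
  have hxne : x ≠ 0 := root_ne_zero hx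
  have hyy := inner_self_pos' hyne
  have hxx := inner_self_pos' hxne
  have hxny : x ≠ -y := by
    intro hc
    rw [hc, inner_neg_left] at hpos
    linarith
  have hdep := not_dep (S := S) hx hy hne hxny
  have hcs := strict_cs hdep hyne
  obtain ⟨zp, hzp⟩ := S.hcrys y hy x hx
  obtain ⟨zq, hzq⟩ := S.hcrys x hx y hy
  have hpq : pr x y * pr y x = 4 * ⟪x,y⟫ ^ 2 / (⟪y,y⟫ * ⟪x,x⟫) := by
    unfold pr
    rw [real_inner_comm x y]
    field_simp
    ring
  have hp : 0 < pr x y := (pr_pos_iff hyne).mpr hpos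
  have hq : 0 < pr y x := (pr_pos_iff hxne).mpr (by rwa [real_inner_comm])
  have hlt : pr x y * pr y x < 4 := by
    rw [hpq, div_lt_iff₀ (by positivity)]
    nlinarith
  have hzp1 : 1 ≤ zp := by
    have : (0 : ℝ) < (zp : ℝ) := hzp ▸ hp
    exact_mod_cast this
  have hzq1 : 1 ≤ zq := by
    have : (0 : ℝ) < (zq : ℝ) := hzq ▸ hq
    exact_mod_cast this
  have hzpq : zp * zq < 4 := by
    have : ((zp * zq : ℤ) : ℝ) < 4 := by push_cast; rw [← hzp, ← hzq]; exact hlt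
    exact_mod_cast this
  have hone : zp = 1 ∨ zq = 1 := by
    by_contra hcon
    push_neg at hcon
    have h2p : 2 ≤ zp := by omega
    have h2q : 2 ≤ zq := by omega
    nlinarith
  rcases hone with h1 | h1
  · have : pr x y = 1 := by rw [hzp, h1]; norm_num
    have hh := S.hrefl y hy x hx
    unfold sr at hh
    rwa [this, one_smul] at hh
  · have : pr y x = 1 := by rw [hzq, h1]; norm_num
    have hh := S.hrefl x hx y hy
    unfold sr at hh
    rw [this, one_smul] at hh
    have := S.hneg _ hh
    rwa [neg_sub] at this

lemma string_add {x y : E} (hx : x ∈ S.Φ) (hy : y ∈ S.Φ) (hneg' : ⟪x, y⟫ < 0)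
    (hne : x ≠ -y) : x + y ∈ S.Φ := by
  have h1 : 0 < ⟪x, -y⟫ := by rw [inner_neg_right]; linarith
  have h2 : x ≠ -y := hne
  have := string_sub (S := S) hx (S.hneg y hy) h1 h2
  rwa [sub_neg_eq_add] at this

/-- the positive roots as a finset. -/
noncomputable def pfin (S : Setup E) : Finset E := (S.hfin.subset S.hsub).toFinset

lemma mem_pfin {γ : E} : γ ∈ S.pfin ↔ γ ∈ S.Φp := Set.Finite.mem_toFinset _

lemma zr (S : Setup E) : ∀ n : ℕ, ∀ l : List E, l.length ≤ n → (∀ γ ∈ l, γ ∈ S.Φp) →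
    ((l ≠ [] → l.sum ≠ 0) ∧ (l.sum ∈ S.Φ → l.sum ∈ S.Φp)) := by
  intro n
  induction n with
  | zero =>
      intro l hlen hl
      rw [List.length_eq_zero_iff.mp (Nat.le_zero.mp hlen)]
      exact ⟨fun h => absurd rfl h, fun h => absurd h S.h0⟩
  | succ n ih =>
      intro l hlen hl
      constructor
      · match l with
        | [] => intro h; exact absurd rfl h
        | γ :: t =>
            intro _ hsum
            have hγ : γ ∈ S.Φp := hl γ (by simp)
            have ht : ∀ x ∈ t, x ∈ S.Φp := fun x hx => hl x (by simp [hx])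
            have htlen : t.length ≤ n := by simpa using hlen
            have htsum : t.sum = -γ := by
              have h1 : γ + t.sum = 0 := by simpa using hsum
              exact eq_neg_of_add_eq_zero_right h1
            rcases eq_or_ne t [] with h | h
            · rw [h] at htsum
              simp at htsum
              exact S.h0 (htsum ▸ pos_root hγ)
            · have : t.sum ∈ S.Φ := htsum ▸ S.hneg γ (pos_root hγ)
              have := (ih t htlen ht).2 this
              rw [htsum] at this
              exact pos_not_neg hγ this
      · intro hσ
        match l with
        | [] => exact absurd hσ S.h0
        | γ₀ :: t₀ =>
            set l' : List E := γ₀ :: t₀ with hl'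
            set σ : E := l'.sum with hσdef
            have hσne : σ ≠ 0 := root_ne_zero hσ
            have hpos : 0 < ⟪σ, σ⟫ := inner_self_pos' hσne
            have : 0 < ((l'.map fun x => ⟪x, σ⟫).sum) := by
              rw [← inner_list_sum]
              exact hpos
            obtain ⟨v, hv, hv0⟩ := exists_pos_of_sum_pos this
            obtain ⟨γ, hγl, hγv⟩ := List.mem_map.mp hv
            have hγp : γ ∈ S.Φp := hl γ hγl
            have hγσ : 0 < ⟪γ, σ⟫ := by rw [hγv]; exact hv0
            obtain ⟨s, t, hst⟩ := List.append_of_mem hγl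
            have hsplit : σ = γ + (s ++ t).sum := by
              rw [hσdef, hst]
              simp [List.sum_append]
              abel
            rcases eq_or_ne σ γ with h | h
            · exact h ▸ hγp
            · have hsub' : σ - γ ∈ S.Φ :=
                string_sub hσ (pos_root hγp) (by rwa [real_inner_comm]) h
              have hrest : (s ++ t).sum = σ - γ := by rw [hsplit]; abel
              have hrl : ∀ x ∈ s ++ t, x ∈ S.Φp := by
                intro x hx
                apply hl
                rw [hst]
                simp at hx ⊢
                tauto
              have hrlen : (s ++ t).length ≤ n := by
                have : l'.length = (s ++ t).length + 1 := by rw [hst]; simp; omega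
                omega
              have hmem : (s ++ t).sum ∈ S.Φp := (ih _ hrlen hrl).2 (hrest ▸ hsub')
              rw [hrest] at hmem
              have := S.hclosed γ hγp _ hmem (by rw [show γ + (σ - γ) = σ by abel]; exact hσ)
              rwa [show γ + (σ - γ) = σ by abel] at this

lemma sum_ne_zero {l : List E} (hl : ∀ γ ∈ l, γ ∈ S.Φp) (hne : l ≠ []) : l.sum ≠ 0 :=
  (zr S l.length l le_rfl hl).1 hne

lemma sum_mem_pos {l : List E} (hl : ∀ γ ∈ l, γ ∈ S.Φp) (h : l.sum ∈ S.Φ) : l.sum ∈ S.Φp :=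
  (zr S l.length l le_rfl hl).2 h

lemma card_bound (S : Setup E) : ∀ n : ℕ, ∀ l : List E, l.length = n → (∀ γ ∈ l, γ ∈ S.Φp) →
    l.sum ∈ S.Φp → ∀ F : Finset E, (∀ τ ∈ F, τ ∈ S.Φp) →
    (∀ τ ∈ F, ∃ t : List E, t ≠ [] ∧ (∀ γ ∈ t, γ ∈ S.Φp) ∧ τ = l.sum + t.sum) →
    n + F.card ≤ S.pfin.card := by
  classical
  intro n
  induction n with
  | zero =>
      intro l hlen hl hsum F hF hinv
      exfalso
      rw [List.length_eq_zero_iff.mp hlen] at hsum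
      exact S.h0 (pos_root hsum)
  | succ n ih =>
      intro l hlen hl hsum F hF hinv
      set σ : E := l.sum with hσdef
      have hlne : l ≠ [] := by
        intro h
        rw [h] at hlen
        simp at hlen
      have hσF : σ ∉ F := by
        intro hc
        obtain ⟨t, htne, htl, hteq⟩ := hinv σ hc
        exact sum_ne_zero htl htne (add_eq_left.mp hteq.symm)
      have hcard' : (insert σ F).card = F.card + 1 := Finset.card_insert_of_notMem hσF
      have hF' : ∀ τ ∈ insert σ F, τ ∈ S.Φp := by
        intro τ hτ
        rcases Finset.mem_insert.mp hτ with h | h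
        · exact h ▸ hsum
        · exact hF τ h
      -- find γ ∈ l with ⟪γ, σ⟫ > 0
      have hσne : σ ≠ 0 := root_ne_zero (pos_root hsum)
      have hpos : 0 < ((l.map fun x => ⟪x, σ⟫).sum) := by
        rw [← inner_list_sum]
        exact inner_self_pos' hσne
      obtain ⟨v, hv, hv0⟩ := exists_pos_of_sum_pos hpos
      obtain ⟨γ, hγl, hγv⟩ := List.mem_map.mp hv
      have hγp : γ ∈ S.Φp := hl γ hγl
      have hγσ : 0 < ⟪γ, σ⟫ := by rw [hγv]; exact hv0
      obtain ⟨s, t, hst⟩ := List.append_of_mem hγl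
      have hsplit : σ = γ + (s ++ t).sum := by
        rw [hσdef, hst]
        simp [List.sum_append]
        abel
      have hrl : ∀ x ∈ s ++ t, x ∈ S.Φp := by
        intro x hx
        apply hl
        rw [hst]
        simp at hx ⊢
        tauto
      have hrlen : (s ++ t).length = n := by
        have : l.length = (s ++ t).length + 1 := by rw [hst]; simp; omega
        omega
      rcases eq_or_ne (s ++ t) [] with hre | hrne
      · -- l = [γ], n = 0
        have hn0 : n = 0 := by rw [hre] at hrlen; simpa using hrlen.symm
        have hsubF : insert σ F ⊆ S.pfin := by
          intro τ hτ
          exact mem_pfin.mpr (hF' τ hτ)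
        have := Finset.card_le_card hsubF
        rw [hcard'] at this
        omega
      · have hσγ : σ ≠ γ := by
          intro hc
          have h1 := hsplit
          rw [← hc] at h1
          exact sum_ne_zero hrl hrne (add_eq_left.mp h1.symm)
        have hsub' : σ - γ ∈ S.Φ :=
          string_sub (pos_root hsum) (pos_root hγp) (by rwa [real_inner_comm]) hσγ
        have hrest : (s ++ t).sum = σ - γ := by rw [hsplit]; abel
        have hmem : (s ++ t).sum ∈ S.Φp := sum_mem_pos hrl (hrest ▸ hsub')
        have hinv' : ∀ τ ∈ insert σ F, ∃ u : List E, u ≠ [] ∧ (∀ γ' ∈ u, γ' ∈ S.Φp) ∧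
            τ = (s ++ t).sum + u.sum := by
          intro τ hτ
          rcases Finset.mem_insert.mp hτ with h | h
          · exact ⟨[γ], by simp, by simpa using hγp, by rw [h, hrest, List.sum_singleton]; abel⟩
          · obtain ⟨u, hune, hul, hueq⟩ := hinv τ h
            refine ⟨γ :: u, by simp, ?_, ?_⟩
            · intro γ' hγ'
              rcases List.mem_cons.mp hγ' with h' | h'
              · exact h' ▸ hγp
              · exact hul γ' h'
            · rw [hueq, hrest]
              simp
              abel
        have := ih (s ++ t) hrlen hrl hmem (insert σ F) hF' hinv'
        rw [hcard'] at this
        omega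

/-- simple (indecomposable) roots. -/
def DSet (S : Setup E) : Set E := {α | α ∈ S.Φp ∧ ¬∃ p ∈ S.Φp, ∃ q ∈ S.Φp, α = p + q}

lemma dset_pos {α : E} (h : α ∈ S.DSet) : α ∈ S.Φp := h.1

lemma length_le {l : List E} (hl : ∀ γ ∈ l, γ ∈ S.Φp) (hsum : l.sum ∈ S.Φp) :
    l.length ≤ S.pfin.card := by
  have := card_bound S l.length l rfl hl hsum ∅ (by simp) (by simp)
  simpa using this

lemma delta_decomp_aux (S : Setup E) : ∀ j : ℕ, ∀ β ∈ S.Φp,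
    (∀ l : List E, (∀ γ ∈ l, γ ∈ S.Φp) → l.sum = β → l.length ≤ j) →
    ∃ d : List E, d ≠ [] ∧ (∀ γ ∈ d, γ ∈ S.DSet) ∧ d.sum = β := by
  intro j
  induction j with
  | zero =>
      intro β hβ hall
      exfalso
      have := hall [β] (by simpa using hβ) (by simp)
      simp at this
  | succ j ih =>
      intro β hβ hall
      by_cases hd : β ∈ S.DSet
      · exact ⟨[β], by simp, by simpa using hd, by simp⟩
      · have hdec : ∃ p ∈ S.Φp, ∃ q ∈ S.Φp, β = p + q := by
          by_contra hc
          exact hd ⟨hβ, hc⟩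
        obtain ⟨p, hp, q, hq, hpq⟩ := hdec
        have hpj : ∀ l : List E, (∀ γ ∈ l, γ ∈ S.Φp) → l.sum = p → l.length ≤ j := by
          intro l hlmem hlsum
          have h1 : ∀ γ ∈ l ++ [q], γ ∈ S.Φp := by
            intro γ hγ
            rcases List.mem_append.mp hγ with h | h
            · exact hlmem γ h
            · simp at h; exact h ▸ hq
          have h2 : (l ++ [q]).sum = β := by rw [List.sum_append, hlsum]; simp [hpq]
          have := hall _ h1 h2
          simp at this
          omega
        have hqj : ∀ l : List E, (∀ γ ∈ l, γ ∈ S.Φp) → l.sum = q → l.length ≤ j := by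
          intro l hlmem hlsum
          have h1 : ∀ γ ∈ l ++ [p], γ ∈ S.Φp := by
            intro γ hγ
            rcases List.mem_append.mp hγ with h | h
            · exact hlmem γ h
            · simp at h; exact h ▸ hp
          have h2 : (l ++ [p]).sum = β := by
            rw [List.sum_append, hlsum]
            simp [hpq]
            abel
          have := hall _ h1 h2
          simp at this
          omega
        obtain ⟨dp, hdpne, hdpl, hdps⟩ := ih p hp hpj
        obtain ⟨dq, hdqne, hdql, hdqs⟩ := ih q hq hqj
        refine ⟨dp ++ dq, by simp [hdpne], ?_, ?_⟩
        · intro γ hγ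
          rcases List.mem_append.mp hγ with h | h
          · exact hdpl γ h
          · exact hdql γ h
        · rw [List.sum_append, hdps, hdqs, hpq]

lemma delta_decomp {β : E} (hβ : β ∈ S.Φp) :
    ∃ d : List E, d ≠ [] ∧ (∀ γ ∈ d, γ ∈ S.DSet) ∧ d.sum = β := by
  apply delta_decomp_aux S S.pfin.card β hβ
  intro l hlmem hlsum
  exact length_le hlmem (hlsum ▸ hβ)

lemma pr_mul_lt_four {x y : E} (hx : x ∈ S.Φ) (hy : y ∈ S.Φ) (h1 : x ≠ y) (h2 : x ≠ -y) :
    pr x y * pr y x < 4 := by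
  have hyne : y ≠ 0 := root_ne_zero hy
  have hxne : x ≠ 0 := root_ne_zero hx
  have hyy := inner_self_pos' hyne
  have hxx := inner_self_pos' hxne
  have hdep := not_dep (S := S) hx hy h1 h2
  have hcs := strict_cs hdep hyne
  have hpq : pr x y * pr y x = 4 * ⟪x,y⟫ ^ 2 / (⟪y,y⟫ * ⟪x,x⟫) := by
    unfold pr
    rw [real_inner_comm x y]
    field_simp
    ring
  rw [hpq, div_lt_iff₀ (by positivity)]
  nlinarith

lemma simple_perm {α β : E} (hα : α ∈ S.DSet) (hβ : β ∈ S.Φp) (hne : β ≠ α) :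
    sr α β ∈ S.Φp := by
  have hαp : α ∈ S.Φp := hα.1
  have hαφ : α ∈ S.Φ := pos_root hαp
  have hβφ : β ∈ S.Φ := pos_root hβ
  have hαne : α ≠ 0 := root_ne_zero hαφ
  have hsrφ : sr α β ∈ S.Φ := sr_mem hαφ hβφ
  by_contra hcon
  have hδp : -(sr α β) ∈ S.Φp := neg_pos_of_not_pos hsrφ hcon
  obtain ⟨zc, hzc⟩ := S.hcrys α hαφ β hβφ
  have hδeq : -(sr α β) = pr β α • α - β := by
    unfold sr
    abel
  set δ : E := -(sr α β) with hδdef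
  have hβδ : β + δ = pr β α • α := by rw [hδeq]; abel
  have hβnegα : β ≠ -α := by
    intro hc
    exact pos_not_neg hαp (by rwa [hc] at hβ)
  rcases le_or_gt zc 0 with hzc0 | hzcpos
  · -- nonpositive coefficient: zero sum of positive roots
    set L : List E := β :: δ :: List.replicate (-zc).toNat α with hL
    have hLmem : ∀ γ ∈ L, γ ∈ S.Φp := by
      intro γ hγ
      rw [hL] at hγ
      rcases List.mem_cons.mp hγ with h | h
      · exact h ▸ hβ
      · rcases List.mem_cons.mp h with h' | h'
        · exact h' ▸ hδp
        · rw [List.eq_of_mem_replicate h']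
          exact hαp
    have hLsum : L.sum = 0 := by
      rw [hL]
      simp only [List.sum_cons, List.sum_replicate]
      rw [← Nat.cast_smul_eq_nsmul ℝ ((-zc).toNat) α]
      have hcast : (((-zc).toNat : ℝ)) = -(zc : ℝ) := by
        have h1 : ((-zc).toNat : ℤ) = -zc := Int.toNat_of_nonneg (by omega)
        exact_mod_cast h1
      rw [hcast, ← hzc, ← add_assoc, hβδ]
      module
    exact sum_ne_zero hLmem (by simp [hL]) hLsum
  · -- positive coefficient
    have hβα_inner : 0 < ⟪β, α⟫ := by
      rw [← pr_pos_iff hαne, hzc]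
      exact_mod_cast hzcpos
    rcases eq_or_lt_of_le (show (0:ℤ) + 1 ≤ zc from hzcpos) with hzc1 | hzc2
    · -- c = 1 : α = β + δ, contradicting indecomposability
      apply hα.2
      refine ⟨β, hβ, δ, hδp, ?_⟩
      rw [hβδ, hzc, ← hzc1]
      norm_num
    · -- c ≥ 2
      have hzc2' : 2 ≤ zc := hzc2
      obtain ⟨za, hza⟩ := S.hcrys β hβφ α hαφ
      have hlt4 := pr_mul_lt_four (S := S) hβφ hαφ hne hβnegα
      have hza1 : 1 ≤ za := by
        have : 0 < pr α β := (pr_pos_iff (root_ne_zero hβφ)).mpr (by rwa [real_inner_comm])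
        rw [hza] at this
        exact_mod_cast this
      have hprod : zc * za < 4 := by
        have : ((zc * za : ℤ) : ℝ) < 4 := by push_cast; rw [← hzc, ← hza]; exact hlt4
        exact_mod_cast this
      have hza_one : za = 1 := by nlinarith
      have hzc3 : zc ≤ 3 := by nlinarith
      have hprαβ : pr α β = 1 := by rw [hza, hza_one]; norm_num
      -- γ = β - α ∈ Φ
      have hγφ : β - α ∈ S.Φ := by
        have h1 := S.hrefl β hβφ α hαφ
        unfold sr at h1
        rw [hprαβ, one_smul] at h1
        have := S.hneg _ h1
        rwa [neg_sub] at this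
      set γ : E := β - α with hγdef
      interval_cases zc
      · -- zc = 2
        have hc2 : pr β α = 2 := by rw [hzc]; norm_num
        have hδ2 : δ = (2:ℝ) • α - β := by rw [hδeq, hc2]
        by_cases hγp : γ ∈ S.Φp
        · apply hα.2
          exact ⟨δ, hδp, γ, hγp, by rw [hδ2, hγdef]; module⟩
        · have hγn : -γ ∈ S.Φp := neg_pos_of_not_pos hγφ hγp
          apply hα.2
          exact ⟨β, hβ, -γ, hγn, by rw [hγdef]; module⟩
      · -- zc = 3
        have hc3 : pr β α = 3 := by rw [hzc]; norm_num
        have hδ3 : δ = (3:ℝ) • α - β := by rw [hδeq, hc3]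
        have hγα : γ ≠ α := by
          intro hc
          have hb : β = (2:ℝ) • α := by
            rw [show β = γ + α by rw [hγdef]; abel, hc]
            module
          rw [hb] at hβφ
          rcases S.hred α hαφ 2 hβφ with h | h <;> norm_num at h
        have hprγα : pr γ α = 1 := by
          rw [hγdef, pr_sub, pr_self hαne, hc3]
          norm_num
        have hηφ : γ - α ∈ S.Φ := by
          have h1 := S.hrefl α hαφ γ hγφ
          unfold sr at h1
          rwa [hprγα, one_smul] at h1
        set η : E := γ - α with hηdef
        by_cases hγp : γ ∈ S.Φp
        · by_cases hηp : η ∈ S.Φp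
          · apply hα.2
            refine ⟨η, hηp, δ, hδp, ?_⟩
            rw [hηdef, hγdef, hδ3]
            module
          · have hηn : -η ∈ S.Φp := neg_pos_of_not_pos hηφ hηp
            apply hα.2
            refine ⟨γ, hγp, -η, hηn, ?_⟩
            rw [hηdef]
            module
        · have hγn : -γ ∈ S.Φp := neg_pos_of_not_pos hγφ hγp
          apply hα.2
          refine ⟨β, hβ, -γ, hγn, ?_⟩
          rw [hγdef]
          module

lemma flip_eq {α γ : E} (hα : α ∈ S.DSet) (hγ : γ ∈ S.Φp) (h : sr α γ ∉ S.Φp) : γ = α := by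
  by_contra hne
  exact h (simple_perm hα hγ hne)

lemma dset_root {α : E} (h : α ∈ S.DSet) : α ∈ S.Φ := pos_root (dset_pos h)

/-- the regular dominant vector `2ρ`. -/
noncomputable def v0 (S : Setup E) : E := ∑ β ∈ S.pfin, β

lemma v0_inner_simple {α : E} (hα : α ∈ S.DSet) : ⟪S.v0, α⟫ = ⟪α, α⟫ := by
  classical
  have hαp : α ∈ S.pfin := mem_pfin.mpr (dset_pos hα)
  have hαne : α ≠ 0 := root_ne_zero (dset_root hα)
  set T : Finset E := S.pfin.erase α with hT
  have hsplit : S.v0 = α + ∑ β ∈ T, β := by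
    rw [v0, ← Finset.add_sum_erase _ _ hαp]
  have hmap : ∀ β ∈ T, sr α β ∈ T := by
    intro β hβ
    obtain ⟨hβα, hβp⟩ := Finset.mem_erase.mp hβ
    have h1 : sr α β ∈ S.Φp := simple_perm hα (mem_pfin.mp hβp) hβα
    refine Finset.mem_erase.mpr ⟨?_, mem_pfin.mpr h1⟩
    intro hc
    have hba : β = -α := by
      have := congrArg (sr α) hc
      rw [sr_sr hαne, sr_root hαne] at this
      exact this
    exact pos_not_neg (dset_pos hα) (hba ▸ mem_pfin.mp hβp)
  have hsum0 : (∑ β ∈ T, ⟪β, α⟫) = 0 := by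
    have hre : (∑ β ∈ T, ⟪β, α⟫) = ∑ β ∈ T, ⟪sr α β, α⟫ := by
      refine Finset.sum_nbij' (fun β => sr α β) (fun β => sr α β) ?_ ?_ ?_ ?_ ?_
      · intro β hβ; exact hmap β hβ
      · intro β hβ; exact hmap β hβ
      · intro β _; exact sr_sr hαne β
      · intro β _; exact sr_sr hαne β
      · intro β _
        rw [sr_sr hαne]
    have hneg' : ∀ β : E, ⟪sr α β, α⟫ = -⟪β, α⟫ := by
      intro β
      have : ⟪sr α β, sr α α⟫ = ⟪β, α⟫ := inner_sr hαne β α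
      rw [sr_root hαne, inner_neg_right] at this
      linarith
    have h2 : (∑ β ∈ T, ⟪β, α⟫) = -∑ β ∈ T, ⟪β, α⟫ := by
      conv_lhs => rw [hre]
      simp only [hneg']
      rw [Finset.sum_neg_distrib]
    linarith [h2]
  rw [hsplit, inner_add_left, sum_inner, hsum0]
  ring

lemma v0_inner_pos {β : E} (hβ : β ∈ S.Φp) : 0 < ⟪S.v0, β⟫ := by
  obtain ⟨d, hdne, hdl, hds⟩ := delta_decomp hβ
  have : ⟪S.v0, β⟫ = (d.map fun γ => ⟪S.v0, γ⟫).sum := by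
    rw [← hds, real_inner_comm, inner_list_sum]
    congr 1
    apply List.map_congr_left
    intro γ _
    exact real_inner_comm S.v0 γ
  rw [this]
  apply List.sum_pos
  · intro x hx
    obtain ⟨γ, hγd, hγx⟩ := List.mem_map.mp hx
    rw [← hγx, v0_inner_simple (hdl γ hγd)]
    exact inner_self_pos' (root_ne_zero (dset_root (hdl γ hγd)))
  · simpa using hdne

lemma act_neg (l : List E) (a : E) : act l (-a) = -act l a := by
  have := act_smul l (-1) a
  simpa using this

lemma exchange : ∀ l : List E, (∀ γ ∈ l, γ ∈ S.DSet) → ∀ α ∈ S.DSet, act l α ∉ S.Φp →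
    ∃ l' : List E, (∀ γ ∈ l', γ ∈ S.DSet) ∧ l'.length + 1 = l.length ∧
      ∀ v, act l' v = act l (sr α v) := by
  intro l
  induction l with
  | nil =>
      intro _ α hα hcon
      exact absurd (dset_pos hα) (by simpa using hcon)
  | cons β t ih =>
      intro hl α hα hcon
      have hβΔ : β ∈ S.DSet := hl β (by simp)
      have ht : ∀ γ ∈ t, γ ∈ S.DSet := fun γ hγ => hl γ (by simp [hγ])
      have htφ : ∀ γ ∈ t, γ ∈ S.Φ := fun γ hγ => dset_root (ht γ hγ)
      by_cases hγ : act t α ∈ S.Φp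
      · have heqβ : act t α = β := by
          apply flip_eq hβΔ hγ
          simpa [act_cons] using hcon
        refine ⟨t, ht, by simp, ?_⟩
        intro v
        have hconj := act_conj (S := S) htφ α v
        rw [heqβ] at hconj
        rw [act_cons, ← hconj, sr_sr (root_ne_zero (dset_root hβΔ))]
      · obtain ⟨t', ht', hlen, heq⟩ := ih ht α hα hγ
        refine ⟨β :: t', ?_, by simpa using hlen, ?_⟩
        · intro γ hγ'
          rcases List.mem_cons.mp hγ' with h | h
          · exact h ▸ hβΔ
          · exact ht' γ h
        · intro v
          rw [act_cons, heq v, act_cons]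

lemma fc_aux : ∀ n : ℕ, ∀ l : List E, l.length ≤ n → (∀ γ ∈ l, γ ∈ S.DSet) →
    ∀ x y : E, (∀ β ∈ S.Φp, 0 ≤ pr x β) → (∀ β ∈ S.Φp, 0 ≤ pr y β) → act l x = y → x = y := by
  intro n
  induction n with
  | zero =>
      intro l hlen _ x y _ _ hact
      rw [List.length_eq_zero_iff.mp (Nat.le_zero.mp hlen)] at hact
      simpa using hact
  | succ n ih =>
      intro l hlen hl x y hx hy hact
      have hlφ : ∀ γ ∈ l, γ ∈ S.Φ := fun γ hγ => dset_root (hl γ hγ)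
      by_cases hex : ∃ α ∈ S.DSet, act l α ∉ S.Φp
      · obtain ⟨α, hαΔ, hcon⟩ := hex
        have hαφ : α ∈ S.Φ := dset_root hαΔ
        have hαΦp : α ∈ S.Φp := dset_pos hαΔ
        have hactφ : act l α ∈ S.Φ := act_mem hlφ hαφ
        have hξ : -(act l α) ∈ S.Φp := neg_pos_of_not_pos hactφ hcon
        have h1 : pr x α = pr y (act l α) := by
          rw [← hact, act_pr hlφ]
        have h2 : pr y (act l α) ≤ 0 := by
          have h3 : act l α = -(-(act l α)) := (neg_neg _).symm
          rw [h3, pr_neg_right]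
          linarith [hy _ hξ]
        have h0' : pr x α = 0 := le_antisymm (h1 ▸ h2) (hx α hαΦp)
        have hsx : sr α x = x := by
          unfold sr
          rw [h0']
          simp
        obtain ⟨l', hl', hlen', heq⟩ := exchange l hl α hαΔ hcon
        have : act l' x = y := by rw [heq x, hsx, hact]
        exact ih l' (by omega) hl' x y hx hy this
      · push_neg at hex
        rcases eq_or_ne l [] with hle | hlne
        · rw [hle] at hact; simpa using hact
        · set αk : E := l.getLast hlne with hαk
          have hαkΔ : αk ∈ S.DSet := hl αk (List.getLast_mem hlne)
          have hαkne : αk ≠ 0 := root_ne_zero (dset_root hαkΔ)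
          have hsplitl : l = l.dropLast ++ [αk] := (List.dropLast_append_getLast hlne).symm
          have hdll : ∀ γ ∈ l.dropLast, γ ∈ S.DSet := fun γ hγ =>
            hl γ (List.dropLast_subset l hγ)
          have h1 : act l αk ∈ S.Φp := hex αk hαkΔ
          have h2 : act l αk = -(act l.dropLast αk) := by
            conv_lhs => rw [hsplitl]
            rw [act_append, act_cons, act_nil, sr_root hαkne, act_neg]
          have h3 : act l.dropLast αk ∉ S.Φp := by
            intro hc
            apply pos_not_neg hc
            rw [← h2]
            exact h1
          obtain ⟨l'', hl'', hlen'', heq''⟩ := exchange l.dropLast hdll αk hαkΔ h3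
          have hact'' : act l'' x = y := by
            have hstep : act (l.dropLast ++ [αk]) x = act l.dropLast (sr αk x) := by
              rw [act_append, act_cons, act_nil]
            rw [heq'' x, ← hstep, ← hsplitl, hact]
          have hlendl : l.dropLast.length + 1 = l.length := by
            conv_rhs => rw [hsplitl]
            simp
          exact ih l'' (by omega) hl'' x y hx hy hact''

lemma fc {l : List E} (hl : ∀ γ ∈ l, γ ∈ S.DSet) {x y : E}
    (hx : ∀ β ∈ S.Φp, 0 ≤ pr x β) (hy : ∀ β ∈ S.Φp, 0 ≤ pr y β)
    (hact : act l x = y) : x = y :=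
  fc_aux l.length l le_rfl hl x y hx hy hact

/-- measure for the induction in `refl_word`. -/
noncomputable def msr (S : Setup E) (β : E) : ℕ :=
  (S.pfin.filter (fun γ => ⟪S.v0, γ⟫ < ⟪S.v0, β⟫)).card

lemma refl_word_aux : ∀ k : ℕ, ∀ β ∈ S.Φp, S.msr β ≤ k →
    ∃ d : List E, (∀ γ ∈ d, γ ∈ S.DSet) ∧ ∀ v, act d v = sr β v := by
  classical
  intro k
  induction k with
  | zero =>
      intro β hβ hm
      by_cases hΔ : β ∈ S.DSet
      · exact ⟨[β], by simpa using hΔ, fun v => by simp [act_cons]⟩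
      · exfalso
        -- we show the measure is positive in the decomposable case, see below;
        -- instead, we handle both cases uniformly in the successor step by
        -- proving the statement again there; here we derive a contradiction.
        -- find γ ∈ Δ with ⟪β,γ⟫ > 0 and β ≠ γ, then β' has smaller measure ≥ 0,
        -- but measure β ≥ 1 since β' ∈ filter. Contradiction with hm : msr β ≤ 0.
        obtain ⟨d, hdne, hdl, hds⟩ := delta_decomp hβ
        have hpos : 0 < ((d.map fun γ => ⟪β, γ⟫).sum) := by
          have h1 : ⟪β, β⟫ = (d.map fun γ => ⟪β, γ⟫).sum := by
            conv_lhs => rw [show ⟪β,β⟫ = ⟪d.sum, β⟫ by rw [hds]]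
            rw [inner_list_sum]
            congr 1
            apply List.map_congr_left
            intro γ _
            exact real_inner_comm β γ
          rw [← h1]
          exact inner_self_pos' (root_ne_zero (pos_root hβ))
        obtain ⟨v', hv', hv0'⟩ := exists_pos_of_sum_pos hpos
        obtain ⟨γ, hγd, hγv⟩ := List.mem_map.mp hv'
        have hγΔ : γ ∈ S.DSet := hdl γ hγd
        have hβγ : β ≠ γ := fun hc => hΔ (hc ▸ hγΔ)
        have hβγi : 0 < ⟪β, γ⟫ := hγv ▸ hv0'
        obtain ⟨zc, hzc⟩ := S.hcrys γ (dset_root hγΔ) β (pos_root hβ)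
        have hzc1 : 1 ≤ zc := by
          have : 0 < pr β γ := (pr_pos_iff (root_ne_zero (dset_root hγΔ))).mpr hβγi
          rw [hzc] at this
          exact_mod_cast this
        have hβ' : sr γ β ∈ S.Φp := simple_perm hγΔ hβ hβγ
        have hlt : ⟪S.v0, sr γ β⟫ < ⟪S.v0, β⟫ := by
          unfold sr
          rw [inner_sub_right, real_inner_smul_right]
          have h2 : 0 < ⟪S.v0, γ⟫ := v0_inner_pos (dset_pos hγΔ)
          have h3 : (1 : ℝ) ≤ pr β γ := by rw [hzc]; exact_mod_cast hzc1
          nlinarith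
        have : sr γ β ∈ S.pfin.filter (fun γ' => ⟪S.v0, γ'⟫ < ⟪S.v0, β⟫) := by
          rw [Finset.mem_filter]
          exact ⟨mem_pfin.mpr hβ', hlt⟩
        have : 0 < S.msr β := Finset.card_pos.mpr ⟨_, this⟩
        omega
  | succ k ih =>
      intro β hβ hm
      by_cases hΔ : β ∈ S.DSet
      · exact ⟨[β], by simpa using hΔ, fun v => by simp [act_cons]⟩
      · obtain ⟨d, hdne, hdl, hds⟩ := delta_decomp hβ
        have hpos : 0 < ((d.map fun γ => ⟪β, γ⟫).sum) := by
          have h1 : ⟪β, β⟫ = (d.map fun γ => ⟪β, γ⟫).sum := by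
            conv_lhs => rw [show ⟪β,β⟫ = ⟪d.sum, β⟫ by rw [hds]]
            rw [inner_list_sum]
            congr 1
            apply List.map_congr_left
            intro γ _
            exact real_inner_comm β γ
          rw [← h1]
          exact inner_self_pos' (root_ne_zero (pos_root hβ))
        obtain ⟨v', hv', hv0'⟩ := exists_pos_of_sum_pos hpos
        obtain ⟨γ, hγd, hγv⟩ := List.mem_map.mp hv'
        have hγΔ : γ ∈ S.DSet := hdl γ hγd
        have hγφ : γ ∈ S.Φ := dset_root hγΔ
        have hγne : γ ≠ 0 := root_ne_zero hγφ
        have hβγ : β ≠ γ := fun hc => hΔ (hc ▸ hγΔ)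
        have hβγi : 0 < ⟪β, γ⟫ := hγv ▸ hv0'
        obtain ⟨zc, hzc⟩ := S.hcrys γ hγφ β (pos_root hβ)
        have hzc1 : 1 ≤ zc := by
          have : 0 < pr β γ := (pr_pos_iff hγne).mpr hβγi
          rw [hzc] at this
          exact_mod_cast this
        set β' : E := sr γ β with hβ'def
        have hβ'p : β' ∈ S.Φp := simple_perm hγΔ hβ hβγ
        have hlt : ⟪S.v0, β'⟫ < ⟪S.v0, β⟫ := by
          rw [hβ'def]
          unfold sr
          rw [inner_sub_right, real_inner_smul_right]
          have h2 : 0 < ⟪S.v0, γ⟫ := v0_inner_pos (dset_pos hγΔ)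
          have h3 : (1 : ℝ) ≤ pr β γ := by rw [hzc]; exact_mod_cast hzc1
          nlinarith
        have hmlt : S.msr β' < S.msr β := by
          apply Finset.card_lt_card
          rw [Finset.ssubset_iff_of_subset]
          · refine ⟨β', ?_, ?_⟩
            · rw [Finset.mem_filter]
              exact ⟨mem_pfin.mpr hβ'p, hlt⟩
            · rw [Finset.mem_filter]
              push_neg
              intro _
              simp
          · intro τ hτ
            rw [Finset.mem_filter] at hτ ⊢
            exact ⟨hτ.1, lt_trans hτ.2 hlt⟩
        obtain ⟨d', hd'l, hd'eq⟩ := ih β' hβ'p (by omega)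
        refine ⟨γ :: (d' ++ [γ]), ?_, ?_⟩
        · intro τ hτ
          rcases List.mem_cons.mp hτ with h | h
          · exact h ▸ hγΔ
          · rcases List.mem_append.mp h with h' | h'
            · exact hd'l τ h'
            · simp at h'
              exact h' ▸ hγΔ
        · intro v
          have hconj : ∀ w, sr (sr γ β') (sr γ w) = sr γ (sr β' w) := by
            intro w
            have := act_conj (S := S) (l := [γ]) (by simpa using hγφ) β' w
            simpa [act_cons] using this
          have hββ' : sr γ β' = β := by rw [hβ'def, sr_sr hγne]
          rw [act_cons, act_append, act_cons, act_nil, hd'eq]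
          have := hconj (sr γ v)
          rw [hββ', sr_sr hγne] at this
          rw [← this]

lemma refl_word {β : E} (hβ : β ∈ S.Φ) :
    ∃ d : List E, (∀ γ ∈ d, γ ∈ S.DSet) ∧ ∀ v, act d v = sr β v := by
  by_cases hp : β ∈ S.Φp
  · exact refl_word_aux (S.msr β) β hp le_rfl
  · have hn : -β ∈ S.Φp := neg_pos_of_not_pos hβ hp
    obtain ⟨d, hdl, hdeq⟩ := refl_word_aux (S.msr (-β)) (-β) hn le_rfl
    exact ⟨d, hdl, fun v => by rw [hdeq v, sr_neg_root]⟩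

lemma act_word_delta {l : List E} (hl : ∀ γ ∈ l, γ ∈ S.Φ) :
    ∃ L : List E, (∀ γ ∈ L, γ ∈ S.DSet) ∧ ∀ v, act L v = act l v := by
  induction l with
  | nil => exact ⟨[], by simp, fun v => rfl⟩
  | cons β t ih =>
      obtain ⟨Lt, hLt, hLteq⟩ := ih (fun γ hγ => hl γ (by simp [hγ]))
      obtain ⟨d, hdl, hdeq⟩ := refl_word (S := S) (hl β (by simp))
      refine ⟨d ++ Lt, ?_, ?_⟩
      · intro γ hγ
        rcases List.mem_append.mp hγ with h | h
        · exact hdl γ h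
        · exact hLt γ h
      · intro v
        rw [act_append, hLteq, hdeq, act_cons]

lemma act_list_sum (w : List E) (t : List E) : act w t.sum = (t.map (act w)).sum := by
  induction t with
  | nil => simp [act_zero]
  | cons μ r ih => simp [act_add, ih]

/-- lists representing elements of the lattice `Q^m`. -/
def IsLrep (S : Setup E) (t : List E) : Prop :=
  ∀ μ ∈ t, ∃ β ∈ S.Φ, μ = (S.m β : ℝ) • β ∨ μ = -((S.m β : ℝ) • β)

/-- the orbit relation of the affine Weyl group. -/
def GW (S : Setup E) (x y : E) : Prop :=
  ∃ l t : List E, (∀ γ ∈ l, γ ∈ S.Φ) ∧ S.IsLrep t ∧ y = act l x + t.sum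

lemma isLrep_nil : S.IsLrep [] := by intro μ hμ; simp at hμ

lemma isLrep_append {t₁ t₂ : List E} (h₁ : S.IsLrep t₁) (h₂ : S.IsLrep t₂) :
    S.IsLrep (t₁ ++ t₂) := by
  intro μ hμ
  rcases List.mem_append.mp hμ with h | h
  · exact h₁ μ h
  · exact h₂ μ h

lemma isLrep_map_act {t : List E} (h : S.IsLrep t) {w : List E} (hw : ∀ γ ∈ w, γ ∈ S.Φ) :
    S.IsLrep (t.map (act w)) := by
  intro μ' hμ'
  obtain ⟨μ, hμ, hμeq⟩ := List.mem_map.mp hμ'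
  obtain ⟨β, hβ, hform⟩ := h μ hμ
  have hβ' : act w β ∈ S.Φ := act_mem hw hβ
  have hm' : S.m (act w β) = S.m β := act_m hw hβ
  refine ⟨act w β, hβ', ?_⟩
  rcases hform with h' | h'
  · left; rw [← hμeq, h', act_smul, hm']
  · right; rw [← hμeq, h', act_neg, act_smul, hm']

lemma isLrep_map_neg {t : List E} (h : S.IsLrep t) : S.IsLrep (t.map Neg.neg) := by
  intro μ' hμ'
  obtain ⟨μ, hμ, hμeq⟩ := List.mem_map.mp hμ'
  obtain ⟨β, hβ, hform⟩ := h μ hμ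
  refine ⟨β, hβ, ?_⟩
  rcases hform with h' | h'
  · right; rw [← hμeq, h']
  · left; rw [← hμeq, h', neg_neg]

lemma list_sum_neg (t : List E) : (t.map (Neg.neg : E → E)).sum = -t.sum := by
  induction t with
  | nil => simp
  | cons μ r ih => simp [ih]; abel

lemma gw_refl (x : E) : S.GW x x := ⟨[], [], by simp, isLrep_nil, by simp⟩

lemma gw_symm {x y : E} (h : S.GW x y) : S.GW y x := by
  obtain ⟨l, t, hl, ht, heq⟩ := h
  have hlrev : ∀ γ ∈ l.reverse, γ ∈ S.Φ := fun γ hγ => hl γ (List.mem_reverse.mp hγ)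
  refine ⟨l.reverse, (t.map (act l.reverse)).map Neg.neg, hlrev,
    isLrep_map_neg (isLrep_map_act ht hlrev), ?_⟩
  rw [list_sum_neg, ← act_list_sum]
  have : act l.reverse y = act l.reverse (act l x) + act l.reverse t.sum := by
    rw [heq, act_add]
  rw [act_reverse_act hl] at this
  rw [this]
  abel

lemma gw_trans {x y z : E} (h₁ : S.GW x y) (h₂ : S.GW y z) : S.GW x z := by
  obtain ⟨l₁, t₁, hl₁, ht₁, heq₁⟩ := h₁
  obtain ⟨l₂, t₂, hl₂, ht₂, heq₂⟩ := h₂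
  refine ⟨l₂ ++ l₁, t₁.map (act l₂) ++ t₂, ?_, isLrep_append (isLrep_map_act ht₁ hl₂) ht₂, ?_⟩
  · intro γ hγ
    rcases List.mem_append.mp hγ with h | h
    · exact hl₂ γ h
    · exact hl₁ γ h
  · rw [heq₂, heq₁, act_add, act_append, List.sum_append, ← act_list_sum]
    abel

lemma pr_sum_int {t : List E} (ht : S.IsLrep t) {β : E} (hβ : β ∈ S.Φ)
    (hcrysm : ∀ α ∈ S.Φ, ∀ γ ∈ S.Φ, ∃ z : ℤ, (S.m γ : ℝ) * pr γ α = (S.m α : ℝ) * z) :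
    ∃ z : ℤ, pr t.sum β = (S.m β : ℝ) * z := by
  induction t with
  | nil => exact ⟨0, by simp [pr_zero]⟩
  | cons μ r ih =>
      have hμ : ∃ z : ℤ, pr μ β = (S.m β : ℝ) * z := by
        obtain ⟨γ, hγ, hform⟩ := ht μ (by simp)
        obtain ⟨z, hz⟩ := hcrysm β hβ γ hγ
        rcases hform with h' | h'
        · exact ⟨z, by rw [h', pr_smul, hz]⟩
        · exact ⟨-z, by rw [h', pr_neg, pr_smul, hz]; push_cast; ring⟩
      obtain ⟨z₁, hz₁⟩ := hμ
      obtain ⟨z₂, hz₂⟩ := ih (fun μ' hμ' => ht μ' (by simp [hμ']))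
      refine ⟨z₁ + z₂, ?_⟩
      rw [List.sum_cons, pr_add, hz₁, hz₂]
      push_cast
      ring

lemma minuscule
    (hcrysm : ∀ α ∈ S.Φ, ∀ γ ∈ S.Φ, ∃ z : ℤ, (S.m γ : ℝ) * pr γ α = (S.m α : ℝ) * z) :
    ∀ n : ℕ, ∀ t : List E, t.length ≤ n → S.IsLrep t →
    (∀ β ∈ S.Φ, |pr t.sum β| ≤ (S.m β : ℝ)) → t.sum = 0 := by
  intro n
  induction n with
  | zero =>
      intro t hlen _ _
      rw [List.length_eq_zero_iff.mp (Nat.le_zero.mp hlen)]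
      rfl
  | succ n ih =>
      intro t hlen ht hb
      by_contra hne
      set ν : E := t.sum with hν
      have hpos : 0 < ((t.map fun μ => ⟪μ, ν⟫).sum) := by
        rw [← inner_list_sum]
        exact inner_self_pos' hne
      obtain ⟨v', hv', hv0'⟩ := exists_pos_of_sum_pos hpos
      obtain ⟨μ, hμt, hμv⟩ := List.mem_map.mp hv'
      have hμν : 0 < ⟪μ, ν⟫ := hμv ▸ hv0'
      obtain ⟨γ₀, hγ₀, hform⟩ := ht μ hμt
      -- normalize the sign
      obtain ⟨γ, hγφ, hμeq, hγν⟩ : ∃ γ ∈ S.Φ, μ = (S.m γ : ℝ) • γ ∧ 0 < ⟪γ, ν⟫ := by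
        rcases hform with h' | h'
        · refine ⟨γ₀, hγ₀, h', ?_⟩
          have hmpos : (0:ℝ) < (S.m γ₀ : ℝ) := by exact_mod_cast m_pos hγ₀
          rw [h', real_inner_smul_left] at hμν
          nlinarith
        · refine ⟨-γ₀, S.hneg γ₀ hγ₀, ?_, ?_⟩
          · rw [h', S.hmneg γ₀ hγ₀]
            module
          · have hmpos : (0:ℝ) < (S.m γ₀ : ℝ) := by exact_mod_cast m_pos hγ₀
            rw [h'] at hμν
            have h2 : ⟪(-γ₀ : E), ν⟫ = (S.m γ₀ : ℝ)⁻¹ * ⟪-((S.m γ₀ : ℝ) • γ₀), ν⟫ := by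
              rw [show (-((S.m γ₀:ℝ) • γ₀) : E) = (S.m γ₀ : ℝ) • (-γ₀) by module,
                real_inner_smul_left]
              field_simp
            rw [h2]
            exact mul_pos (inv_pos.mpr hmpos) hμν
      have hγne : γ ≠ 0 := root_ne_zero hγφ
      have hmγpos : (0:ℝ) < (S.m γ : ℝ) := by exact_mod_cast m_pos hγφ
      have hprν : 0 < pr ν γ := (pr_pos_iff hγne).mpr (by rwa [real_inner_comm])
      obtain ⟨z, hz⟩ := pr_sum_int ht hγφ hcrysm
      rw [← hν] at hz
      have hz1 : 1 ≤ z := by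
        by_contra hc
        push_neg at hc
        have : (z:ℝ) ≤ 0 := by exact_mod_cast (by omega : z ≤ 0)
        nlinarith [hz ▸ hprν]
      have hzle : (z:ℝ) ≤ 1 := by
        have hub := hb γ hγφ
        rw [hz, abs_of_pos (by positivity)] at hub
        nlinarith
      have hzeq : (z:ℝ) = 1 := le_antisymm hzle (by exact_mod_cast hz1)
      have hprνγ : pr ν γ = (S.m γ : ℝ) := by rw [hz, hzeq, mul_one]
      obtain ⟨s, r, hsr⟩ := List.append_of_mem hμt
      have hνsplit : ν = μ + (s ++ r).sum := by
        rw [hν, hsr]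
        simp [List.sum_append]
        abel
      set ν' : E := (s ++ r).sum with hν'
      have hν'eq : ν' = sr γ ν := by
        unfold sr
        rw [hprνγ, ← hμeq]
        have : ν' = ν - μ := by rw [hνsplit]; abel
        rw [this]
      have hb' : ∀ β ∈ S.Φ, |pr ν' β| ≤ (S.m β : ℝ) := by
        intro β hβ
        rw [hν'eq, pr_sr_swap hγne]
        have := hb (sr γ β) (sr_mem hγφ hβ)
        rwa [S.hminv γ hγφ β hβ] at this
      have hlen' : (s ++ r).length ≤ n := by
        have : t.length = (s ++ r).length + 1 := by rw [hsr]; simp; omega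
        omega
      have hrep' : S.IsLrep (s ++ r) := by
        intro μ' hμ'
        apply ht
        rw [hsr]
        simp at hμ' ⊢
        tauto
      have h0' : ν' = 0 := ih (s ++ r) hlen' hrep' hb'
      -- then ν = μ = m γ • γ, contradicting the bound at γ
      have hνμ : ν = μ := by
        rw [hνsplit, h0', add_zero]
      have : pr ν γ = 2 * (S.m γ : ℝ) := by
        rw [hνμ, hμeq, pr_smul, pr_self hγne]
        ring
      have hub := hb γ hγφ
      rw [this, abs_of_pos (by positivity)] at hub
      nlinarith

noncomputable def ffin (S : Setup E) : Finset E := S.hfin.toFinset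

lemma mem_ffin {γ : E} : γ ∈ S.ffin ↔ γ ∈ S.Φ := Set.Finite.mem_toFinset _

lemma affine_unique
    (hcrysm : ∀ α ∈ S.Φ, ∀ γ ∈ S.Φ, ∃ z : ℤ, (S.m γ : ℝ) * pr γ α = (S.m α : ℝ) * z)
    {x y : E}
    (hxC : ∀ β ∈ S.Φ, |pr x β| ≤ (S.m β : ℝ)) (hxdom : ∀ β ∈ S.Φp, 0 ≤ pr x β)
    (hyC : ∀ β ∈ S.Φ, |pr y β| ≤ (S.m β : ℝ)) (hydom : ∀ β ∈ S.Φp, 0 ≤ pr y β)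
    (hgw : S.GW x y) : x = y := by
  classical
  rcases Finset.eq_empty_or_nonempty S.ffin with hem | hΦne
  · -- Φ empty : GW forces y = x
    obtain ⟨l, t, hl, ht, heq⟩ := hgw
    have hl0 : l = [] := by
      cases l with
      | nil => rfl
      | cons a l' =>
          exfalso
          have := hl a (by simp)
          have := mem_ffin.mpr this
          rw [hem] at this
          simp at this
    have ht0 : t = [] := by
      cases t with
      | nil => rfl
      | cons a t' =>
          exfalso
          obtain ⟨β, hβ, _⟩ := ht a (by simp)
          have := mem_ffin.mpr hβ
          rw [hem] at this
          simp at this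
    rw [hl0, ht0] at heq
    simp at heq
    exact heq.symm
  · set f : E → ℝ := fun β => (S.m β : ℝ)^2 * ⟪β, β⟫ with hf
    set δ₂ : ℝ := (S.ffin.image f).min' (hΦne.image f) with hδ₂
    have hδ₂pos : 0 < δ₂ := by
      have hmem := Finset.min'_mem (S.ffin.image f) (hΦne.image f)
      rw [← hδ₂] at hmem
      obtain ⟨β, hβ, hβeq⟩ := Finset.mem_image.mp hmem
      have hβφ : β ∈ S.Φ := mem_ffin.mp hβ
      have h1 : (0:ℝ) < (S.m β : ℝ) := by exact_mod_cast m_pos hβφ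
      have h2 := inner_self_pos' (root_ne_zero hβφ)
      rw [← hβeq, hf]
      positivity
    have hδ₂le : ∀ β ∈ S.Φ, δ₂ ≤ f β := by
      intro β hβ
      exact Finset.min'_le _ _ (Finset.mem_image_of_mem f (mem_ffin.mpr hβ))
    -- main induction
    have main : ∀ n : ℕ, ∀ l t : List E, (∀ γ ∈ l, γ ∈ S.Φ) → S.IsLrep t →
        y = act l x + t.sum → ‖t.sum‖^2 < n * δ₂ → x = y := by
      intro n
      induction n with
      | zero =>
          intro l t _ _ _ hlt
          exfalso
          have := sq_nonneg ‖t.sum‖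
          simp at hlt
          nlinarith
      | succ n ih =>
          intro l t hl ht heq hlt
          set ν : E := t.sum with hν
          by_cases hcase : ∀ β ∈ S.Φ, |pr ν β| ≤ (S.m β : ℝ)
          · have hν0 : ν = 0 := minuscule hcrysm t.length t le_rfl ht hcase
            rw [hν0, add_zero] at heq
            obtain ⟨L, hL, hLeq⟩ := act_word_delta hl
            exact fc hL hxdom hydom (by rw [hLeq x, ← heq])
          · push_neg at hcase
            obtain ⟨β₀, hβ₀φ, hβ₀gt⟩ := hcase
            -- produce β with m β < pr ν β
            obtain ⟨β, hβφ, hβgt⟩ : ∃ β ∈ S.Φ, (S.m β : ℝ) < pr ν β := by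
              rcases le_or_gt 0 (pr ν β₀) with hsgn | hsgn
              · exact ⟨β₀, hβ₀φ, by rwa [abs_of_nonneg hsgn] at hβ₀gt⟩
              · refine ⟨-β₀, S.hneg β₀ hβ₀φ, ?_⟩
                rw [pr_neg_right, S.hmneg β₀ hβ₀φ]
                rw [abs_of_neg hsgn] at hβ₀gt
                linarith
            have hβne : β ≠ 0 := root_ne_zero hβφ
            have hmβpos : (0:ℝ) < (S.m β : ℝ) := by exact_mod_cast m_pos hβφ
            obtain ⟨z, hz⟩ := pr_sum_int ht hβφ hcrysm
            rw [← hν] at hz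
            have hz2 : (z:ℝ) ≥ 2 := by
              have h1 : 1 < (z:ℝ) := by nlinarith [hz ▸ hβgt]
              have : 1 < z := by exact_mod_cast h1
              exact_mod_cast this
            -- upper bound : pr ν β ≤ 2 m β
            have hprx : |pr (act l x) β| ≤ (S.m β : ℝ) := by
              have hlrev : ∀ γ ∈ l.reverse, γ ∈ S.Φ := fun γ hγ => hl γ (List.mem_reverse.mp hγ)
              rw [pr_act_left hl]
              have h1 := hxC (act l.reverse β) (act_mem hlrev hβφ)
              rwa [act_m hlrev hβφ] at h1
            have hpry : pr y β = pr (act l x) β + pr ν β := by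
              rw [heq, pr_add]
            have hub : pr ν β ≤ 2 * (S.m β : ℝ) := by
              have h1 := hyC β hβφ
              have h2 := abs_le.mp h1
              have h3 := abs_le.mp hprx
              rw [hpry] at h2
              linarith [h2.2, h3.1]
            have hz2' : (z:ℝ) ≤ 2 := by nlinarith [hz ▸ hub]
            have hzeq : (z:ℝ) = 2 := le_antisymm hz2' hz2
            have hprν2 : pr ν β = 2 * (S.m β : ℝ) := by rw [hz, hzeq]; ring
            have hpryβ : pr y β = (S.m β : ℝ) := by
              have h1 := abs_le.mp (hyC β hβφ)
              have h3 := abs_le.mp hprx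
              have : (S.m β : ℝ) ≤ pr y β := by
                rw [hpry, hprν2]
                linarith [h3.1]
              linarith [h1.2]
            -- construct the new data
            set t' : List E := t ++ [-((S.m β : ℝ) • β)] with ht'
            have ht'rep : S.IsLrep t' := by
              apply isLrep_append ht
              intro μ hμ
              simp at hμ
              exact ⟨β, hβφ, Or.inr hμ⟩
            have hν' : t'.sum = ν - (S.m β : ℝ) • β := by
              rw [ht', List.sum_append, ← hν]
              simp
              abel
            have hsrν : sr β ν = ν - (2 * (S.m β : ℝ)) • β := by
              unfold sr
              rw [hprν2]
            have hsry : sr β y = y - (S.m β : ℝ) • β := by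
              unfold sr
              rw [hpryβ]
            have heq' : y = act (β :: l) x + t'.sum := by
              have h1 : y - (S.m β : ℝ) • β = sr β (act l x) + (ν - (2 * (S.m β : ℝ)) • β) := by
                rw [← hsry, ← hsrν, heq, sr_add]
              rw [act_cons, hν']
              calc y = (y - (S.m β : ℝ) • β) + (S.m β : ℝ) • β := by module
                _ = (sr β (act l x) + (ν - (2 * (S.m β : ℝ)) • β)) + (S.m β : ℝ) • β := by
                    rw [h1]
                _ = sr β (act l x) + (ν - (S.m β : ℝ) • β) := by module
            have hl' : ∀ γ ∈ β :: l, γ ∈ S.Φ := by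
              intro γ hγ
              rcases List.mem_cons.mp hγ with h | h
              · exact h ▸ hβφ
              · exact hl γ h
            have hinn : ⟪ν, β⟫ = (S.m β : ℝ) * ⟪β, β⟫ := by
              have h1 := inner_eq_pr ν β
              rw [hprν2] at h1
              linarith
            have hnorm : ‖t'.sum‖^2 ≤ ‖ν‖^2 - δ₂ := by
              rw [hν']
              rw [show (ν - (S.m β : ℝ) • β : E) = ν - ((S.m β : ℝ) • β) from rfl]
              rw [norm_sub_sq_real]
              rw [real_inner_smul_right, hinn]
              have hns : ‖(S.m β : ℝ) • β‖^2 = (S.m β : ℝ)^2 * ⟪β, β⟫ := by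
                rw [norm_smul, Real.norm_eq_abs, abs_of_pos hmβpos, mul_pow,
                  ← real_inner_self_eq_norm_sq]
              rw [hns]
              have hth := hδ₂le β hβφ
              have hth2 : δ₂ ≤ (S.m β : ℝ)^2 * ⟪β, β⟫ := hth
              nlinarith [hth2]
            apply ih (β :: l) t' hl' ht'rep heq'
            have : (n:ℝ) * δ₂ = ((n+1:ℕ):ℝ) * δ₂ - δ₂ := by push_cast; ring
            rw [this]
            calc ‖t'.sum‖^2 ≤ ‖ν‖^2 - δ₂ := hnorm
              _ < ((n+1:ℕ):ℝ) * δ₂ - δ₂ := by rw [hν]; push_cast at hlt ⊢; linarith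
    -- kick off
    obtain ⟨l, t, hl, ht, heq⟩ := hgw
    obtain ⟨n, hn⟩ := exists_nat_gt (‖t.sum‖^2 / δ₂)
    apply main n l t hl ht heq
    rw [div_lt_iff₀ hδ₂pos] at hn
    linarith

lemma pfin_nonempty (hne : S.ffin.Nonempty) : S.pfin.Nonempty := by
  obtain ⟨α, hα⟩ := hne
  have hαφ : α ∈ S.Φ := mem_ffin.mp hα
  by_cases h : α ∈ S.Φp
  · exact ⟨α, mem_pfin.mpr h⟩
  · exact ⟨-α, mem_pfin.mpr (neg_pos_of_not_pos hαφ h)⟩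

lemma pr_v0_pos {α : E} (hα : α ∈ S.Φp) : 0 < pr S.v0 α :=
  (pr_pos_iff (root_ne_zero (pos_root hα))).mpr (v0_inner_pos hα)

lemma exist_descent (hne : S.ffin.Nonempty)
    (rel : E → E → Prop)
    (hrel1 : ∀ u : E, ∀ α ∈ S.Φ, rel u (sr α u))
    (hrel2 : ∀ u : E, ∀ α ∈ S.Φ, rel u (u + (S.m α : ℝ) • α))
    {z : E} (hz : ∀ α ∈ S.Φ, ∃ k : ℤ, pr z α = (k : ℝ)) :
    ∃ μ : E, (∀ α ∈ S.Φ, ∃ k : ℤ, pr μ α = (k : ℝ)) ∧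
      (∀ α ∈ S.Φp, 0 ≤ pr μ α ∧ pr μ α ≤ (S.m α : ℝ)) ∧
      Relation.EqvGen rel z μ := by
  classical
  have hpne := pfin_nonempty (S := S) hne
  -- the interior point c₀
  set ε : ℝ := ((S.pfin.image (fun α => (S.m α : ℝ) / pr S.v0 α)).min' (hpne.image _)) / 2
    with hε
  have hεpos : 0 < ε := by
    have hmin : 0 < (S.pfin.image (fun α => (S.m α : ℝ) / pr S.v0 α)).min' (hpne.image _) := by
      rw [Finset.lt_min'_iff]
      intro b hb
      obtain ⟨α, hα, hαeq⟩ := Finset.mem_image.mp hb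
      have hαp : α ∈ S.Φp := mem_pfin.mp hα
      have h1 : (0:ℝ) < (S.m α : ℝ) := by exact_mod_cast m_pos (pos_root hαp)
      have h2 := pr_v0_pos (S := S) hαp
      rw [← hαeq]
      positivity
    rw [hε]
    linarith
  set c₀ : E := ε • S.v0 with hc₀
  have hs₀ : ∀ α ∈ S.Φp, 0 < pr c₀ α ∧ pr c₀ α < (S.m α : ℝ) := by
    intro α hα
    have h2 := pr_v0_pos (S := S) hα
    have h1 : (0:ℝ) < (S.m α : ℝ) := by exact_mod_cast m_pos (pos_root hα)
    have hle : ε ≤ ((S.m α : ℝ) / pr S.v0 α) / 2 := by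
      rw [hε]
      have := Finset.min'_le (S.pfin.image (fun α => (S.m α : ℝ) / pr S.v0 α))
        _ (Finset.mem_image_of_mem _ (mem_pfin.mpr hα))
      linarith
    constructor
    · rw [hc₀, pr_smul]
      positivity
    · rw [hc₀, pr_smul]
      have h3 : ε < (S.m α : ℝ) / pr S.v0 α := by
        have h4 : 0 < (S.m α : ℝ) / pr S.v0 α := by positivity
        linarith
      calc ε * pr S.v0 α < ((S.m α : ℝ) / pr S.v0 α) * pr S.v0 α := by
            exact mul_lt_mul_of_pos_right h3 h2
        _ = (S.m α : ℝ) := by field_simp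
  -- the minimal decrease δ₁
  set g : E → ℝ := fun α => min (⟪α, α⟫ * pr c₀ α) (⟪α, α⟫ * ((S.m α : ℝ) - pr c₀ α)) with hg
  set δ₁ : ℝ := (S.pfin.image g).min' (hpne.image _) with hδ₁
  have hδ₁pos : 0 < δ₁ := by
    rw [hδ₁, Finset.lt_min'_iff]
    intro b hb
    obtain ⟨α, hα, hαeq⟩ := Finset.mem_image.mp hb
    have hαp : α ∈ S.Φp := mem_pfin.mp hα
    obtain ⟨h1, h2⟩ := hs₀ α hαp
    have h3 := inner_self_pos' (root_ne_zero (pos_root hαp))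
    rw [← hαeq, hg]
    simp only [lt_min_iff]
    constructor <;> nlinarith
  have hδ₁le : ∀ α ∈ S.Φp, δ₁ ≤ g α := by
    intro α hα
    exact Finset.min'_le _ _ (Finset.mem_image_of_mem g (mem_pfin.mpr hα))
  -- descent
  have main : ∀ n : ℕ, ∀ w : E, (∀ α ∈ S.Φ, ∃ k : ℤ, pr w α = (k : ℝ)) →
      ‖w - c₀‖^2 < n * δ₁ →
      ∃ μ : E, (∀ α ∈ S.Φ, ∃ k : ℤ, pr μ α = (k : ℝ)) ∧
        (∀ α ∈ S.Φp, 0 ≤ pr μ α ∧ pr μ α ≤ (S.m α : ℝ)) ∧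
        Relation.EqvGen rel w μ := by
    intro n
    induction n with
    | zero =>
        intro w _ hlt
        exfalso
        simp at hlt
        nlinarith [sq_nonneg ‖w - c₀‖]
    | succ n ih =>
        intro w hw hlt
        by_cases hdom : ∀ α ∈ S.Φp, 0 ≤ pr w α ∧ pr w α ≤ (S.m α : ℝ)
        · exact ⟨w, hw, hdom, Relation.EqvGen.refl w⟩
        · push_neg at hdom
          obtain ⟨α, hαp, hviol⟩ := hdom
          have hαφ : α ∈ S.Φ := pos_root hαp
          have hαne : α ≠ 0 := root_ne_zero hαφ
          have hαi := inner_self_pos' hαne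
          obtain ⟨k, hk⟩ := hw α hαφ
          obtain ⟨hs₀1, hs₀2⟩ := hs₀ α hαp
          have hδg := hδ₁le α hαp
          have hδg1 : δ₁ ≤ ⟪α, α⟫ * pr c₀ α := le_trans hδg (min_le_left _ _)
          have hδg2 : δ₁ ≤ ⟪α, α⟫ * ((S.m α : ℝ) - pr c₀ α) := le_trans hδg (min_le_right _ _)
          -- the distance identity for w' = w - r • α :
          have hdist : ∀ r : ℝ, ‖(w - r • α) - c₀‖^2
              = ‖w - c₀‖^2 - r * (pr w α - pr c₀ α) * ⟪α, α⟫ + r^2 * ⟪α, α⟫ := by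
            intro r
            have h1 : (w - r • α) - c₀ = (w - c₀) - r • α := by abel
            rw [h1, norm_sub_sq_real, real_inner_smul_right]
            have h2 : 2 * ⟪w - c₀, α⟫ = (pr w α - pr c₀ α) * ⟪α, α⟫ := by
              rw [← pr_sub]
              exact inner_eq_pr (w - c₀) α
            have h3 : ‖r • α‖^2 = r^2 * ⟪α, α⟫ := by
              rw [norm_smul, Real.norm_eq_abs, mul_pow, sq_abs, ← real_inner_self_eq_norm_sq]
            rw [h3]
            linear_combination (-r) * h2
          rcases lt_or_ge (pr w α) 0 with hneg' | hge
          · -- pr w α < 0, i.e. k ≤ -1 : reflect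
            have hk1 : (k:ℝ) ≤ -1 := by
              have : k < 0 := by exact_mod_cast hk ▸ hneg'
              exact_mod_cast (by omega : k ≤ -1)
            set w' : E := sr α w with hw'
            have hw'int : ∀ β ∈ S.Φ, ∃ j : ℤ, pr w' β = (j : ℝ) := by
              intro β hβ
              rw [hw', pr_sr_swap hαne]
              exact hw (sr α β) (sr_mem hαφ hβ)
            have hw'eq : w' = w - pr w α • α := rfl
            have hdec : ‖w' - c₀‖^2 ≤ ‖w - c₀‖^2 - δ₁ := by
              rw [hw'eq, hdist (pr w α)]
              have hwα : pr w α ≤ -1 := by rw [hk]; exact hk1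
              nlinarith [hs₀1, hαi, hδg1]
            obtain ⟨μ, hμ1, hμ2, hμ3⟩ := ih w' hw'int (by
              have : (n:ℝ) * δ₁ = ((n+1:ℕ):ℝ) * δ₁ - δ₁ := by push_cast; ring
              rw [this]
              push_cast at hlt ⊢
              linarith)
            exact ⟨μ, hμ1, hμ2, Relation.EqvGen.trans _ _ _
              (Relation.EqvGen.rel _ _ (hrel1 w α hαφ)) hμ3⟩
          · -- pr w α > m α, i.e. k ≥ m+1 : reflect and translate
            have hbig : (S.m α : ℝ) < pr w α := hviol hge
            have hk1 : (S.m α : ℝ) + 1 ≤ (k:ℝ) := by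
              have h1 : (S.m α : ℤ) < k := by
                have : (S.m α : ℝ) < (k : ℝ) := hk ▸ hbig
                exact_mod_cast this
              have : (S.m α : ℤ) + 1 ≤ k := by omega
              exact_mod_cast this
            set w₁ : E := sr α w with hw₁
            set w' : E := w₁ + (S.m α : ℝ) • α with hw'
            have hw'eq : w' = w - (pr w α - (S.m α : ℝ)) • α := by
              rw [hw', hw₁]
              unfold sr
              module
            have hw'int : ∀ β ∈ S.Φ, ∃ j : ℤ, pr w' β = (j : ℝ) := by
              intro β hβ
              rw [hw', pr_add, pr_smul]
              obtain ⟨j₁, hj₁⟩ := hw (sr α β) (sr_mem hαφ hβ)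
              obtain ⟨j₂, hj₂⟩ := S.hcrys β hβ α hαφ
              refine ⟨j₁ + (S.m α : ℤ) * j₂, ?_⟩
              rw [hw₁, pr_sr_swap hαne, hj₁, hj₂]
              push_cast
              ring
            have hdec : ‖w' - c₀‖^2 ≤ ‖w - c₀‖^2 - δ₁ := by
              rw [hw'eq, hdist (pr w α - (S.m α : ℝ))]
              have hwα : (S.m α : ℝ) + 1 ≤ pr w α := by rw [hk]; exact hk1
              nlinarith [hs₀2, hαi, hδg2]
            obtain ⟨μ, hμ1, hμ2, hμ3⟩ := ih w' hw'int (by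
              have : (n:ℝ) * δ₁ = ((n+1:ℕ):ℝ) * δ₁ - δ₁ := by push_cast; ring
              rw [this]
              push_cast at hlt ⊢
              linarith)
            refine ⟨μ, hμ1, hμ2, ?_⟩
            have e1 : Relation.EqvGen rel w w₁ := Relation.EqvGen.rel _ _ (hrel1 w α hαφ)
            have e2 : Relation.EqvGen rel w₁ w' := Relation.EqvGen.rel _ _ (hrel2 w₁ α hαφ)
            exact Relation.EqvGen.trans _ _ _ e1 (Relation.EqvGen.trans _ _ _ e2 hμ3)
  obtain ⟨n, hn⟩ := exists_nat_gt (‖z - c₀‖^2 / δ₁)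
  apply main n z hz
  rw [div_lt_iff₀ hδ₁pos] at hn
  linarith

end Setup

end MetaplecticAlcove

open MetaplecticAlcove MetaplecticAlcove.Setup

/-- Each orbit of the affine Weyl group `W ⋉ Q^m` on the weight lattice `P` meets
`C ∩ P^+` in exactly one point, where
`C = {λ ∈ P : |(λ,α^∨)| ≤ m(α) ∀ α ∈ Φ}`; in particular every `W ⋉ P^m`-orbit in `P`
meets `C`.  The group `W ⋉ Q^m` is generated by the reflections `s_α` and the
translations by `m(α)α` (`α ∈ Φ`), so its orbits are those of the equivalence
relation generated by `u ↦ u - (u,α^∨)α` and `u ↦ u + m(α)α`; similarly for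
`W ⋉ P^m`, adjoining translations by elements of `P^m`. -/
theorem affine_Weyl_orbit_meets_alcove
    {E : Type*} [NormedAddCommGroup E] [InnerProductSpace ℝ E]
    (Φ : Set E) (hfin : Φ.Finite) (h0 : (0 : E) ∉ Φ)
    (hneg : ∀ α ∈ Φ, -α ∈ Φ)
    (pair : E → E → ℝ) (hpair : ∀ lam a, pair lam a = 2 * ⟪lam, a⟫ / ⟪a, a⟫)
    (hcrys : ∀ α ∈ Φ, ∀ β ∈ Φ, ∃ z : ℤ, pair β α = (z : ℝ))
    (hrefl : ∀ α ∈ Φ, ∀ β ∈ Φ, β - pair β α • α ∈ Φ)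
    (hred : ∀ α ∈ Φ, ∀ c : ℝ, c • α ∈ Φ → c = 1 ∨ c = -1)
    (Φplus : Set E) (hsub : Φplus ⊆ Φ)
    (hpart : ∀ α ∈ Φ, (α ∈ Φplus ↔ ¬ (-α ∈ Φplus)))
    (hclosed : ∀ α ∈ Φplus, ∀ β ∈ Φplus, α + β ∈ Φ → α + β ∈ Φplus)
    (m : E → ℕ) (hm : ∀ α ∈ Φ, 0 < m α)
    (hmneg : ∀ α ∈ Φ, m (-α) = m α)
    (hminv : ∀ α ∈ Φ, ∀ β ∈ Φ, m (β - pair β α • α) = m β)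
    (hcrysm : ∀ α ∈ Φ, ∀ β ∈ Φ, ∃ z : ℤ, (m β : ℝ) * pair β α = (m α : ℝ) * (z : ℝ))
    -- the weight lattice, the lattice `P^m`, the dominant cone and the set `C`
    (P Pm Pplus C : Set E)
    (hP : P = {lam : E | ∀ α ∈ Φ, ∃ z : ℤ, pair lam α = (z : ℝ)})
    (hPm : Pm = {lam : E | ∀ α ∈ Φ, ∃ z : ℤ, pair lam α = (m α : ℝ) * (z : ℝ)})
    (hPplus : Pplus = {lam ∈ P | ∀ α ∈ Φplus, 0 ≤ pair lam α})
    (hC : C = {lam ∈ P | ∀ α ∈ Φ, |pair lam α| ≤ (m α : ℝ)})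
    -- the orbit equivalence relations of `W ⋉ Q^m` and of `W ⋉ P^m`
    (rel rel2 : E → E → Prop)
    (hrel : rel = fun u v =>
      ∃ α ∈ Φ, v = u - pair u α • α ∨ v = u + (m α : ℝ) • α)
    (hrel2 : rel2 = fun u v => rel u v ∨ ∃ ν ∈ Pm, v = u + ν) :
    ∀ lam ∈ P,
      (∃! mu : E, (mu ∈ C ∧ mu ∈ Pplus) ∧ Relation.EqvGen rel lam mu) ∧
      (∃ mu : E, mu ∈ C ∧ Relation.EqvGen rel2 lam mu) := by
  have hpe : pair = MetaplecticAlcove.pr := by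
    funext l a
    rw [hpair]
    rfl
  subst hpe
  subst hrel2 hrel hP hPm hPplus hC
  intro lam hlam
  rcases Set.eq_empty_or_nonempty Φ with hΦe | hΦne
  · -- the degenerate case of an empty root system
    subst hΦe
    have hrid : ∀ a b : E, Relation.EqvGen
        (fun u v => ∃ α ∈ (∅ : Set E), v = u - pr u α • α ∨ v = u + (m α : ℝ) • α) a b →
        a = b := by
      intro a b h
      induction h with
      | rel a b hab => obtain ⟨α, hα, _⟩ := hab; simp at hα
      | refl => rfl
      | symm a b _ ih => exact ih.symm
      | trans a b c _ _ ih₁ ih₂ => exact ih₁.trans ih₂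
    have hpe0 : Φplus = ∅ := Set.subset_empty_iff.mp hsub
    have hCmem : ∀ α ∈ (∅ : Set E), |pr lam α| ≤ (m α : ℝ) := by simp
    have hPmem : ∀ α ∈ Φplus, 0 ≤ pr lam α := by
      intro α hα
      rw [hpe0] at hα
      simp at hα
    constructor
    · refine ⟨lam, ⟨⟨⟨hlam, hCmem⟩, ⟨hlam, hPmem⟩⟩, Relation.EqvGen.refl lam⟩, ?_⟩
      intro y hy
      exact (hrid lam y hy.2).symm
    · exact ⟨lam, ⟨hlam, hCmem⟩, Relation.EqvGen.refl lam⟩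
  · -- the main case
    set S : Setup E :=
      { Φ := Φ, Φp := Φplus, m := m, hfin := hfin, h0 := h0, hneg := hneg,
        hcrys := hcrys, hrefl := hrefl, hred := hred, hsub := hsub, hpart := hpart,
        hclosed := hclosed, hm := hm, hmneg := hmneg, hminv := hminv } with hS
    have hne : S.ffin.Nonempty := by
      obtain ⟨α, hα⟩ := hΦne
      exact ⟨α, mem_ffin.mpr hα⟩
    set rel : E → E → Prop :=
      fun u v => ∃ α ∈ Φ, v = u - pr u α • α ∨ v = u + (m α : ℝ) • α with hreldef
    have hrel1 : ∀ u : E, ∀ α ∈ S.Φ, rel u (sr α u) := by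
      intro u α hα
      exact ⟨α, hα, Or.inl rfl⟩
    have hrel2' : ∀ u : E, ∀ α ∈ S.Φ, rel u (u + (S.m α : ℝ) • α) := by
      intro u α hα
      exact ⟨α, hα, Or.inr rfl⟩
    obtain ⟨μ, hμint, hμdom, hμeqv⟩ :=
      exist_descent (S := S) hne rel hrel1 hrel2' (z := lam) hlam
    -- μ ∈ C
    have hμC : ∀ α ∈ Φ, |pr μ α| ≤ (m α : ℝ) := by
      intro α hα
      by_cases hp : α ∈ Φplus
      · obtain ⟨h1, h2⟩ := hμdom α hp
        rw [abs_of_nonneg h1]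
        exact h2
      · have hnp : -α ∈ Φplus := neg_pos_of_not_pos (S := S) hα hp
        obtain ⟨h1, h2⟩ := hμdom (-α) hnp
        rw [pr_neg_right] at h1 h2
        have h2' : -pr μ α ≤ (m (-α) : ℝ) := h2
        rw [hmneg α hα] at h2'
        rw [abs_le]
        constructor <;> linarith
    -- translation from EqvGen to GW
    have eqv_gw : ∀ a b : E, Relation.EqvGen rel a b → S.GW a b := by
      intro a b h
      induction h with
      | rel a b hab =>
          obtain ⟨α, hα, hab'⟩ := hab
          rcases hab' with h' | h'
          · exact ⟨[α], [], by simpa using hα, isLrep_nil (S := S), by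
              simp [act_cons, h']
              rfl⟩
          · exact ⟨[], [(m α : ℝ) • α], by simp, by
              intro ν hν
              simp at hν
              exact ⟨α, hα, Or.inl hν⟩, by simp [h']⟩
      | refl a => exact gw_refl (S := S) a
      | symm a b _ ih => exact gw_symm ih
      | trans a b c _ _ ih₁ ih₂ => exact gw_trans ih₁ ih₂
    constructor
    · refine ⟨μ, ⟨⟨⟨hμint, hμC⟩, ⟨hμint, fun α hα => (hμdom α hα).1⟩⟩, hμeqv⟩, ?_⟩
      intro y hy
      obtain ⟨⟨hyCmem, hyPmem⟩, hyeqv⟩ := hy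
      have hyC : ∀ α ∈ Φ, |pr y α| ≤ (m α : ℝ) := hyCmem.2
      have hydom : ∀ α ∈ Φplus, 0 ≤ pr y α := hyPmem.2
      have hyμ : Relation.EqvGen rel y μ :=
        Relation.EqvGen.trans _ _ _ (Relation.EqvGen.symm _ _ hyeqv) hμeqv
      exact affine_unique (S := S) hcrysm hyC hydom hμC (fun α hα => (hμdom α hα).1)
        (eqv_gw y μ hyμ)
    · refine ⟨μ, ⟨hμint, hμC⟩, ?_⟩
      apply Relation.EqvGen.mono (r := rel)
      · intro a b h
        exact Or.inl h
      · exact hμeqv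
end

section
/- For λ in the group algebra setting, the metaplectic divided difference operator ∇̄_i defined by ∇̄_i(x^λ) = ((1 - x^{-(q(λ),α_i^{m∨})α_i^m})/(1 - x^{α_i^m})) x^λ satisfies the identity x^λ ∇_i^m(x^ν) = ∇̄_i(x^{λ+ν}) - ∇̄_i(x^λ) x^{s_iν} for all λ ∈ P and ν ∈ P^m, where ∇_i^m(x^ν) = (x^ν - x^{s_iν})/(1 - x^{α_i^m}) is the ordinary divided difference operator on ℂ[P^m]. -/
open AddMonoidAlgebra

/-- The metaplectic divided difference operator identity (Lemma 3.7(i)).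

The weight lattice `P` is modelled by an additive group `L` equipped with the
coroot pairing `χ = (·, α_i^∨) : L →+ ℤ` and the simple root `αi` (so `χ αi = 2`,
`s_i λ = λ - χ(λ)αi`, `α_i^m = m•αi`, and `(q(λ), α_i^{m∨}) = (χλ - χλ % m)/m`).
In the fraction field of the group algebra `ℂ[L]`, with `X p` the image of the
basis element `x^p`,
`x^λ ∇_i^m(x^ν) = ∇̄_i(x^{λ+ν}) - ∇̄_i(x^λ)x^{s_iν}`
for all `λ ∈ P` and `ν` with `m ∣ χ ν` (in particular for all `ν ∈ P^m`), where
`∇̄_i(x^λ) = ((1 - x^{-(q(λ),α_i^{m∨})α_i^m})/(1 - x^{α_i^m}))x^λ` and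
`∇_i^m(x^ν) = (x^ν - x^{s_iν})/(1 - x^{α_i^m})`. -/
theorem metaplectic_divided_difference_identity
    {L : Type*} [AddCommGroup L] [IsDomain (AddMonoidAlgebra ℂ L)]
    (χ : L →+ ℤ) (αi : L) (hαi : χ αi = 2) (m : ℕ) (hm : 0 < m)
    (X : L → FractionRing (AddMonoidAlgebra ℂ L))
    (hX : X = fun p => algebraMap (AddMonoidAlgebra ℂ L) _ (AddMonoidAlgebra.single p 1))
    (nabla : L → FractionRing (AddMonoidAlgebra ℂ L))
    (hnabla : nabla = fun p =>
      (1 - X ((-((χ p - χ p % (m : ℤ)) / (m : ℤ))) • (m • αi))) / (1 - X (m • αi)) * X p) :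
    ∀ lam ν : L, (m : ℤ) ∣ χ ν →
      X lam * ((X ν - X (ν - χ ν • αi)) / (1 - X (m • αi)))
        = nabla (lam + ν) - nabla lam * X (ν - χ ν • αi) := by
  intro lam ν hdvd
  obtain ⟨c, hc⟩ := hdvd
  have hmul : ∀ a b : L, X (a + b) = X a * X b := by
    subst hX
    intro a b
    simp only [← map_mul, AddMonoidAlgebra.single_mul_single, one_mul]
  -- integer exponent facts
  have hm' : (m : ℤ) ≠ 0 := by exact_mod_cast hm.ne'
  set k : ℤ := (χ lam - χ lam % (m : ℤ)) / (m : ℤ) with hk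
  have hχsum : χ (lam + ν) = χ lam + (m : ℤ) * c := by
    rw [map_add, hc]
  have hkey : (χ (lam + ν) - χ (lam + ν) % (m : ℤ)) / (m : ℤ) = k + c := by
    rw [hχsum, Int.add_mul_emod_self_left]
    have : χ lam + (m : ℤ) * c - χ lam % (m : ℤ)
        = (χ lam - χ lam % (m : ℤ)) + c * (m : ℤ) := by ring
    rw [this, Int.add_mul_ediv_right _ _ hm']
  -- rewrite lattice points
  have hν : ν - χ ν • αi = ν + (-c) • (m • αi) := by
    rw [hc]
    push_cast
    module
  have he₂ : (-((χ (lam + ν) - χ (lam + ν) % (m : ℤ)) / (m : ℤ))) • (m • αi)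
      = (-k) • (m • αi) + (-c) • (m • αi) := by
    rw [hkey, neg_add, add_smul]
  subst hnabla
  simp only [he₂, hν, hmul, ← hk]
  rcases eq_or_ne (1 - X (m • αi)) 0 with h | h
  · simp [h]
  · field_simp
    ring
end

section
/- In the group algebra of the semidirect product W ⋉ ℂ(P^m), the normalized intertwiner φ(s_i) := (k_i/c_i)T_i + 1 - k_i²/c_i, where c_i = (1 - k_i²x^{α_i^m})/(1 - x^{α_i^m}) and T_i := k_i + k_i^{-1}c_i(s_i - 1), satisfies the quadratic Hecke relation (T_i - k_i)(T_i + k_i^{-1}) = 0 and φ(s_i)² = 1 as operators, i.e. the Demazure–Lusztig element T_i = k_i + k_i^{-1}c_i(s_i - 1) in W ⋉ ℂ(P^m) satisfies the Hecke quadratic relation. -/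
/-- The Demazure–Lusztig element `T_i = k_i + k_i⁻¹ c_i (s_i - 1)` of
`W ⋉ ℂ(P^m)` satisfies the quadratic Hecke relation, and the normalized
intertwiner `φ(s_i) = (k_i/c_i)T_i + 1 - k_i²/c_i` squares to the identity.

The field `K` plays the role of `ℂ(P^m)`, the ring endomorphism `s` is the field
automorphism by which the simple reflection `s_i` acts (an involution fixing the
constant `k`), `X` is the element `x^{α_i^m}` (so `s X = X⁻¹`), and
`c = (1 - k²X)/(1 - X)` is the `c`-function `c_i`.  Viewing `T_i` and `φ(s_i)`
as the operators `T f = k f + k⁻¹ c (s f - f)` and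
`φ f = (k/c)(T f) + f - (k²/c) f` on `K`:
`(T_i - k_i)(T_i + k_i⁻¹) = 0` and `φ(s_i)² = 1`. -/
theorem demazure_lusztig_quadratic_relation
    {K : Type*} [Field K] (k : K) (hk : k ≠ 0)
    (s : K →+* K) (hs : ∀ f, s (s f) = f) (hsk : s k = k)
    (X : K) (hX0 : X ≠ 0) (hX1 : X ≠ 1) (hX2 : k ^ 2 * X ≠ 1)
    (hsX : s X = X⁻¹)
    (c : K) (hc : c = (1 - k ^ 2 * X) / (1 - X))
    (T φ : K → K)
    (hT : T = fun f => k * f + k⁻¹ * c * (s f - f))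
    (hφ : φ = fun f => (k / c) * T f + f - (k ^ 2 / c) * f) :
    (∀ f : K, T (T f) = (k - k⁻¹) * T f + f) ∧ (∀ f : K, φ (φ f) = f) := by
  subst hc hT hφ
  have h1X : (1 : K) - X ≠ 0 := sub_ne_zero.mpr (Ne.symm hX1)
  have h1Xi : (1 : K) - X⁻¹ ≠ 0 := by
    intro h
    apply hX1
    have := sub_eq_zero.mp h
    field_simp at this
    exact this
  have hnum : (1 : K) - k ^ 2 * X ≠ 0 := by
    intro h
    exact hX2 ((sub_eq_zero.mp h).symm)
  have hc0 : (1 - k ^ 2 * X) / (1 - X) ≠ 0 := div_ne_zero hnum h1X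
  have hkX : -k + k * X ≠ 0 := by
    have h := mul_ne_zero hk (sub_ne_zero.mpr hX1)
    intro h'
    exact h (by linear_combination h')
  have hX1' : X - 1 ≠ 0 := sub_ne_zero.mpr hX1
  have hd : (1 - k ^ 2 * X⁻¹) / (1 - X⁻¹) = 1 + k ^ 2 - (1 - k ^ 2 * X) / (1 - X) := by
    rw [div_eq_iff h1Xi]
    field_simp
    ring
  constructor
  · intro f
    simp only [map_add, map_mul, map_sub, map_div₀, map_inv₀, map_one, map_pow, hsk, hsX, hs]
    rw [hd]
    generalize (1 - k ^ 2 * X) / (1 - X) = c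
    field_simp
    ring
  · intro f
    have hφs : ∀ g : K, ((k / ((1 - k ^ 2 * X) / (1 - X))) *
        (k * g + k⁻¹ * ((1 - k ^ 2 * X) / (1 - X)) * (s g - g)) + g
        - (k ^ 2 / ((1 - k ^ 2 * X) / (1 - X))) * g) = s g := by
      intro g
      field_simp
      ring
    simp only
    rw [hφs, hφs, hs]
end
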